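/- arXiv:2107.12559 — 4 statements merged into one kernel-verified Lean document; each statement's English description precedes it below -/
import Mathlib

section
/- For complex s with Re(s) > 0, real w > 0, and complex b with Re(b) > 0 and Re(b-s) > 0, the integral ∫₀^∞ v^{s-1} · ζ(b+1, v+w+1/2) dv equals Γ(s) · Γ(b+1-s) · ζ(b+1-s, w+1/2) / Γ(b+1), where ζ(s,a) is the Hurwitz zeta function. -/
open Complex MeasureTheory Set Filter

/-- The Hurwitz zeta function as a series `ζ(s,a) = Σ_{k=0}^∞ 1/(k+a)^s`
(valid representation in the stated parameter range). -/
noncomputable def hurwitzZetaSeries (s : ℂ) (a : ℂ) : ℂ :=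
  ∑' k : ℕ, 1 / ((k : ℂ) + a) ^ s

lemma key_aux {s r : ℂ} (hs : 0 < s.re) (hrs : 0 < (r - s).re) {c : ℝ} (hc : 0 < c) :
    IntegrableOn (fun v : ℝ => (v : ℂ) ^ (s - 1) * ((v : ℂ) + c) ^ (-r)) (Ioi 0) ∧
    ∫ v in Ioi (0 : ℝ), (v : ℂ) ^ (s - 1) * ((v : ℂ) + c) ^ (-r) =
      (c : ℂ) ^ (s - r) * (Complex.Gamma s * Complex.Gamma (r - s) / Complex.Gamma r) := by
  set f : ℝ → ℝ := fun v => v / (v + c) with hf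
  set f' : ℝ → ℝ := fun v => c / (v + c) ^ 2 with hf'
  set g : ℝ → ℂ := fun x : ℝ => (x : ℂ) ^ (s - 1) * (1 - (x : ℂ)) ^ (r - s - 1) with hg
  have hderiv : ∀ v ∈ Ioi (0 : ℝ), HasDerivWithinAt f (f' v) (Ioi 0) v := by
    intro v hv
    have hv0 : (0 : ℝ) < v := hv
    have h0 : v + c ≠ 0 := by positivity
    have : HasDerivAt f ((1 * (v + c) - v * 1) / (v + c) ^ 2) v :=
      (hasDerivAt_id v).div ((hasDerivAt_id v).add_const c) h0
    have heq : (1 * (v + c) - v * 1) / (v + c) ^ 2 = f' v := by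
      simp only [hf']; ring
    exact (heq ▸ this).hasDerivWithinAt
  have hinj : InjOn f (Ioi 0) := by
    intro a ha b hb h
    have ha0 : (0:ℝ) < a := ha
    have hb0 : (0:ℝ) < b := hb
    have h1 : a + c ≠ 0 := by positivity
    have h2 : b + c ≠ 0 := by positivity
    rw [hf] at h
    rw [div_eq_div_iff h1 h2] at h
    have : a * c = b * c := by nlinarith
    exact mul_right_cancel₀ hc.ne' this
  have himg : f '' Ioi 0 = Ioo 0 1 := by
    ext y
    constructor
    · rintro ⟨v, hv, rfl⟩
      have hv0 : (0:ℝ) < v := hv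
      have hvc : (0:ℝ) < v + c := by positivity
      exact ⟨div_pos hv0 hvc, (div_lt_one hvc).mpr (by linarith)⟩
    · rintro ⟨hy0, hy1⟩
      refine ⟨c * y / (1 - y), ?_, ?_⟩
      · have : (0:ℝ) < 1 - y := by linarith
        exact div_pos (by positivity) this
      · have h1y' : (0:ℝ) < 1 - y := by linarith
        have h1y : (1:ℝ) - y ≠ 0 := h1y'.ne'
        simp only [hf]
        have hd : c * y / (1 - y) + c = c / (1 - y) := by field_simp; ring
        have hne : c * y / (1 - y) + c ≠ 0 := by positivity
        rw [div_eq_iff hne, hd]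
        field_simp
  have hpt : ∀ v ∈ Ioi (0 : ℝ),
      |f' v| • g (f v) = (c : ℂ) ^ (r - s) * ((v : ℂ) ^ (s - 1) * ((v : ℂ) + c) ^ (-r)) := by
    intro v hv
    have hv0 : (0:ℝ) < v := hv
    have hp : (0:ℝ) < v + c := by positivity
    have hp0 : ((v:ℂ) + c) ≠ 0 := by
      have : (((v + c : ℝ)) : ℂ) ≠ 0 := ofReal_ne_zero.mpr hp.ne'
      push_cast at this; exact this
    have hC0 : (c : ℂ) ≠ 0 := ofReal_ne_zero.mpr hc.ne'
    have harg : (((v + c : ℝ) : ℂ)).arg ≠ Real.pi := by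
      rw [arg_ofReal_of_nonneg hp.le]; exact Real.pi_ne_zero.symm
    have e1 : ((f v : ℝ) : ℂ) ^ (s - 1) = (v : ℂ) ^ (s - 1) * ((v : ℂ) + c) ^ (-(s - 1)) := by
      have : f v = v * (v + c)⁻¹ := by rw [hf]; ring
      rw [this, ofReal_mul, mul_cpow_ofReal_nonneg hv0.le (by positivity), ofReal_inv,
        inv_cpow _ _ harg, ← cpow_neg]
      push_cast; ring_nf
    have e2 : (1 - ((f v : ℝ) : ℂ)) ^ (r - s - 1)
        = (c : ℂ) ^ (r - s - 1) * ((v : ℂ) + c) ^ (-(r - s - 1)) := by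
      have h1 : (1 : ℂ) - ((f v : ℝ) : ℂ) = ((c * (v + c)⁻¹ : ℝ) : ℂ) := by
        have : (1 : ℝ) - f v = c * (v + c)⁻¹ := by rw [hf]; field_simp; ring
        rw [← this]; push_cast; ring
      rw [h1, ofReal_mul, mul_cpow_ofReal_nonneg hc.le (by positivity), ofReal_inv,
        inv_cpow _ _ harg, ← cpow_neg]
      push_cast; ring_nf
    have e3 : |f' v| = c / (v + c) ^ 2 := by
      rw [hf']; exact abs_of_pos (by positivity)
    rw [hg]; simp only
    rw [e1, e2, e3, real_smul]
    have e4 : ((c / (v + c) ^ 2 : ℝ) : ℂ) = (c : ℂ) / ((v : ℂ) + c) ^ 2 := by push_cast; ring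
    rw [e4]
    have e5 : ((v : ℂ) + c) ^ (-(s - 1)) * ((v : ℂ) + c) ^ (-(r - s - 1))
        = ((v : ℂ) + c) ^ ((2 : ℂ) - r) := by
      rw [← cpow_add _ _ hp0]; ring_nf
    have e6 : ((v : ℂ) + c) ^ ((2 : ℂ) - r) = ((v : ℂ) + c) ^ (2 : ℕ) * ((v : ℂ) + c) ^ (-r) := by
      rw [← cpow_natCast, ← cpow_add _ _ hp0]; push_cast; ring_nf
    have e7 : (c : ℂ) * (c : ℂ) ^ (r - s - 1) = (c : ℂ) ^ (r - s) := by
      have h7 : r - s = 1 + (r - s - 1) := by ring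
      rw [h7, cpow_add _ _ hC0, cpow_one]
      ring_nf
    calc (c : ℂ) / ((v : ℂ) + c) ^ 2 *
          ((v : ℂ) ^ (s - 1) * ((v : ℂ) + c) ^ (-(s - 1)) *
            ((c : ℂ) ^ (r - s - 1) * ((v : ℂ) + c) ^ (-(r - s - 1))))
        = (c : ℂ) * (c : ℂ) ^ (r - s - 1) * (v : ℂ) ^ (s - 1) *
            (((v : ℂ) + c) ^ (-(s - 1)) * ((v : ℂ) + c) ^ (-(r - s - 1))) / ((v : ℂ) + c) ^ 2 := by
          ring
      _ = (c : ℂ) ^ (r - s) * (v : ℂ) ^ (s - 1) *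
            (((v : ℂ) + c) ^ (2 : ℕ) * ((v : ℂ) + c) ^ (-r)) / ((v : ℂ) + c) ^ 2 := by
          rw [e5, e6, e7]
      _ = (c : ℂ) ^ (r - s) * ((v : ℂ) ^ (s - 1) * ((v : ℂ) + c) ^ (-r)) := by
          have : ((v : ℂ) + c) ^ (2 : ℕ) ≠ 0 := pow_ne_zero _ hp0
          field_simp
  have hg_int : IntegrableOn g (Ioo 0 1) := by
    have := Complex.betaIntegral_convergent hs hrs
    rw [intervalIntegrable_iff_integrableOn_Ioc_of_le zero_le_one] at this
    exact this.mono_set Ioo_subset_Ioc_self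
  have hC0 : (c : ℂ) ≠ 0 := ofReal_ne_zero.mpr hc.ne'
  have hCrs : (c : ℂ) ^ (r - s) ≠ 0 := fun h => hC0 ((cpow_eq_zero_iff _ _).mp h).1
  -- change of variables
  have hchg := integral_image_eq_integral_abs_deriv_smul measurableSet_Ioi hderiv hinj g
  rw [himg] at hchg
  have hcongr : ∫ v in Ioi (0:ℝ), |f' v| • g (f v)
      = (c : ℂ) ^ (r - s) * ∫ v in Ioi (0:ℝ), (v : ℂ) ^ (s - 1) * ((v : ℂ) + c) ^ (-r) := by
    rw [← integral_const_mul]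
    exact setIntegral_congr_fun measurableSet_Ioi hpt
  have hbeta : ∫ x in Ioo (0:ℝ) 1, g x = Complex.betaIntegral s (r - s) := by
    rw [Complex.betaIntegral, intervalIntegral.integral_of_le zero_le_one,
      integral_Ioc_eq_integral_Ioo]
  have hGr : Complex.Gamma r ≠ 0 := by
    apply Complex.Gamma_ne_zero_of_re_pos
    have h : r.re = (r - s).re + s.re := by rw [Complex.sub_re]; ring
    rw [h]; positivity
  have hbval : Complex.betaIntegral s (r - s)
      = Complex.Gamma s * Complex.Gamma (r - s) / Complex.Gamma r := by
    have := Complex.Gamma_mul_Gamma_eq_betaIntegral hs hrs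
    rw [add_sub_cancel] at this
    field_simp [hGr, this]
    rw [this]; ring
  constructor
  · -- integrability
    have h1 : IntegrableOn (fun v => |f' v| • g (f v)) (Ioi 0) := by
      rw [← integrableOn_image_iff_integrableOn_abs_deriv_smul measurableSet_Ioi hderiv hinj g,
        himg]
      exact hg_int
    have h2 : IntegrableOn
        (fun v : ℝ => (c : ℂ) ^ (r - s) * ((v : ℂ) ^ (s - 1) * ((v : ℂ) + c) ^ (-r))) (Ioi 0) :=
      h1.congr_fun hpt measurableSet_Ioi
    have h3 := h2.const_mul ((c : ℂ) ^ (r - s))⁻¹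
    refine IntegrableOn.congr_fun h3 (fun v _ => ?_) measurableSet_Ioi
    field_simp
  · -- value
    have : Complex.betaIntegral s (r - s)
        = (c : ℂ) ^ (r - s) * ∫ v in Ioi (0:ℝ), (v : ℂ) ^ (s - 1) * ((v : ℂ) + c) ^ (-r) := by
      rw [← hbval] at *
      rw [← hcongr, ← hchg, hbeta, hbval]
    rw [hbval] at this
    have hsr : (c : ℂ) ^ (s - r) = ((c : ℂ) ^ (r - s))⁻¹ := by
      rw [← cpow_neg]; ring_nf
    have hI := (eq_inv_mul_iff_mul_eq₀ hCrs).mpr this.symm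
    rw [hsr]
    exact hI

theorem mellin_hurwitzZeta (s b : ℂ) (w : ℝ) (hs : 0 < s.re) (hw : 0 < w)
    (hb : 0 < b.re) (hbs : 0 < (b - s).re) :
    ∫ v in Ioi (0 : ℝ), (v : ℂ) ^ (s - 1) * hurwitzZetaSeries (b + 1) ((v : ℂ) + w + 1 / 2) =
      Complex.Gamma s * Complex.Gamma (b + 1 - s) *
        hurwitzZetaSeries (b + 1 - s) ((w : ℂ) + 1 / 2) / Complex.Gamma (b + 1) := by
  set σ := s.re with hσ
  set ρ := b.re with hρ
  have hρσ : σ < ρ := by have := hbs; rw [Complex.sub_re] at this; linarith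
  set c : ℕ → ℝ := fun k => k + w + 1 / 2 with hc
  have hck : ∀ k, 0 < c k := fun k => by positivity
  have hbs1 : 0 < (b + 1 - s).re := by
    rw [show b + 1 - s = (b - s) + 1 by ring, Complex.add_re, Complex.one_re]
    linarith
  set F : ℕ → ℝ → ℂ :=
    fun k v => (v : ℂ) ^ (s - 1) * ((v : ℂ) + (c k : ℝ)) ^ (-(b + 1)) with hF
  have hkey : ∀ k : ℕ,
      IntegrableOn (F k) (Ioi 0) ∧
      ∫ v in Ioi (0 : ℝ), F k v =
        (c k : ℂ) ^ (s - (b + 1)) *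
          (Complex.Gamma s * Complex.Gamma (b + 1 - s) / Complex.Gamma (b + 1)) := by
    intro k
    exact key_aux (s := s) (r := b + 1) hs hbs1 (hck k)
  -- pointwise identification of the sum
  have hptsum : ∀ v ∈ Ioi (0 : ℝ),
      (v : ℂ) ^ (s - 1) * hurwitzZetaSeries (b + 1) ((v : ℂ) + w + 1 / 2)
        = ∑' k : ℕ, F k v := by
    intro v hv
    rw [hurwitzZetaSeries, ← tsum_mul_left]
    congr 1
    ext k
    rw [hF]
    congr 1
    rw [cpow_neg, one_div]
    congr 2
    simp only [hc]
    push_cast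
    ring
  -- summability of norms of integrals
  have hnorm : ∀ k : ℕ, ∫ v in Ioi (0 : ℝ), ‖F k v‖ =
      ((c k : ℂ) ^ ((σ : ℂ) - ((ρ : ℂ) + 1)) *
        (Complex.Gamma (σ : ℂ) * Complex.Gamma ((ρ : ℂ) + 1 - σ) /
          Complex.Gamma ((ρ : ℂ) + 1))).re := by
    intro k
    have h2 := key_aux (s := (σ : ℂ)) (r := (ρ : ℂ) + 1)
      (by simpa using hs) (by simp [Complex.sub_re, Complex.add_re]; linarith) (hck k)
    rw [← h2.2]
    have : ∀ v ∈ Ioi (0 : ℝ),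
        ((‖F k v‖ : ℝ) : ℂ) = (v : ℂ) ^ ((σ : ℂ) - 1) * ((v : ℂ) + (c k : ℝ)) ^ (-((ρ : ℂ) + 1)) := by
      intro v hv
      have hv0 : (0 : ℝ) < v := hv
      have hvc : (0 : ℝ) < v + c k := by have := hck k; linarith
      have n1 : ‖(v : ℂ) ^ (s - 1)‖ = v ^ (σ - 1) := by
        rw [Complex.norm_cpow_eq_rpow_re_of_pos hv0, Complex.sub_re,
          Complex.one_re]
      have hb2 : ((v : ℂ) + (c k : ℝ)) = (((v + c k : ℝ)) : ℂ) := by push_cast; ring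
      have n2 : ‖((v : ℂ) + (c k : ℝ)) ^ (-(b + 1))‖ = (v + c k) ^ (-(ρ + 1)) := by
        rw [hb2, Complex.norm_cpow_eq_rpow_re_of_pos hvc, Complex.neg_re,
          Complex.add_re, Complex.one_re]
      rw [hF]
      simp only [norm_mul, n1, n2]
      rw [ofReal_mul, Complex.ofReal_cpow hv0.le, Complex.ofReal_cpow hvc.le, hb2]
      push_cast
      ring
    have hoc : ((∫ v in Ioi (0:ℝ), ‖F k v‖ : ℝ) : ℂ)
        = ∫ v in Ioi (0:ℝ), (v : ℂ) ^ ((σ : ℂ) - 1) * ((v : ℂ) + (c k : ℝ)) ^ (-((ρ : ℂ) + 1)) := by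
      rw [show ∀ g : ℝ → ℝ, ((∫ v in Ioi (0:ℝ), g v : ℝ) : ℂ) = ∫ v in Ioi (0:ℝ), ((g v : ℝ) : ℂ) from fun g => integral_ofReal.symm]
      exact setIntegral_congr_fun measurableSet_Ioi this
    have h3 := congrArg Complex.re hoc
    rwa [Complex.ofReal_re] at h3
  have hsum : Summable fun k : ℕ => ∫ v in Ioi (0 : ℝ), ‖F k v‖ := by
    simp only [hnorm]
    have hGpow : Summable fun k : ℕ => (c k : ℂ) ^ ((σ : ℂ) - ((ρ : ℂ) + 1)) := by
      apply Summable.of_norm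
      have h1col := (Real.summable_one_div_nat_add_rpow (w + 1 / 2) (ρ + 1 - σ)).mpr
        (by linarith)
      apply Summable.congr h1col
      intro k
      have hck' := hck k
      have habs : |(k : ℝ) + (w + 1 / 2)| = c k := by
        rw [abs_of_pos (by positivity)]; simp only [hc]; ring
      rw [habs, Complex.norm_cpow_eq_rpow_re_of_pos (hck k)]
      rw [show ((σ : ℂ) - ((ρ : ℂ) + 1)).re = -(ρ + 1 - σ) by
        simp [Complex.sub_re, Complex.add_re]]
      rw [Real.rpow_neg (hck k).le, one_div]
    have hG := hGpow.mul_right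
      (Complex.Gamma (σ : ℂ) * Complex.Gamma ((ρ : ℂ) + 1 - σ) / Complex.Gamma ((ρ : ℂ) + 1))
    exact hG.map Complex.reCLM Complex.reCLM.continuous
  rw [setIntegral_congr_fun measurableSet_Ioi hptsum,
    ← integral_tsum_of_summable_integral_norm (fun k => (hkey k).1) hsum]
  calc ∑' k : ℕ, ∫ v in Ioi (0 : ℝ), F k v
      = ∑' k : ℕ, (1 / ((k : ℂ) + ((w : ℂ) + 1 / 2)) ^ (b + 1 - s)) *
          (Complex.Gamma s * Complex.Gamma (b + 1 - s) / Complex.Gamma (b + 1)) := by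
        refine tsum_congr fun k => ?_
        rw [(hkey k).2]
        congr 1
        rw [show s - (b + 1) = -(b + 1 - s) by ring, cpow_neg, one_div]
        congr 2
        simp only [hc]
        push_cast
        ring
    _ = (∑' k : ℕ, 1 / ((k : ℂ) + ((w : ℂ) + 1 / 2)) ^ (b + 1 - s)) *
          (Complex.Gamma s * Complex.Gamma (b + 1 - s) / Complex.Gamma (b + 1)) :=
        tsum_mul_right
    _ = Complex.Gamma s * Complex.Gamma (b + 1 - s) *
          hurwitzZetaSeries (b + 1 - s) ((w : ℂ) + 1 / 2) / Complex.Gamma (b + 1) := by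
        rw [hurwitzZetaSeries]
        ring
end

section
/- For real v > 0, the limit as b → 0 of (ζ(b+1, v) − 1/b) equals −ψ(v), where ψ is the digamma function. -/
open Complex Filter

/-- The classical Hurwitz zeta function `ζ(s,a)` for real `a > 0`, defined (by analytic
continuation in `s`) from Mathlib's periodic Hurwitz zeta function on `[0,1)` by removing
the finitely many initial terms. -/
noncomputable def hzeta (s : ℂ) (a : ℝ) : ℂ :=
  HurwitzZeta.hurwitzZeta (↑(Int.fract a) : UnitAddCircle) s -
    ∑ m ∈ Finset.range ⌊a⌋₊, ((m : ℂ) + (Int.fract a : ℝ)) ^ (-s)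

/-- The digamma function `ψ(z) = Γ'(z)/Γ(z)`. -/
noncomputable def digamma (z : ℂ) : ℂ := deriv Complex.Gamma z / Complex.Gamma z

open Set Topology

local notation "γ" => Real.eulerMascheroniConstant

/-- Auxiliary: log (c+n) - log n → 0. -/
lemma aux_tendsto_log_sub_log (c : ℝ) :
    Tendsto (fun n : ℕ ↦ Real.log (c + n) - Real.log n) atTop (𝓝 0) := by
  have h1 : Tendsto (fun n : ℕ ↦ (c + n) / n) atTop (𝓝 1) := by
    have h2 : Tendsto (fun n : ℕ ↦ c / n + 1) atTop (𝓝 (0 + 1)) :=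
      (tendsto_const_div_atTop_nhds_zero_nat c).add tendsto_const_nhds
    rw [zero_add] at h2
    refine h2.congr' ?_
    filter_upwards [eventually_gt_atTop 0] with n hn
    field_simp
  have h3 : Tendsto (fun n : ℕ ↦ Real.log ((c + n) / n)) atTop (𝓝 0) := by
    have := (Real.continuousAt_log one_ne_zero).tendsto.comp h1
    simpa [Function.comp_def] using this
  refine h3.congr' ?_
  filter_upwards [eventually_gt_atTop ⌈|c|⌉₊] with n hn
  have hn0 : (0:ℝ) < n := by exact_mod_cast Nat.pos_of_ne_zero (by omega)
  have hcn : (0:ℝ) < c + n := by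
    have : |c| < n := by
      calc |c| ≤ ⌈|c|⌉₊ := Nat.le_ceil _
      _ < n := by exact_mod_cast hn
    have := neg_abs_le c
    linarith
  rw [Real.log_div hcn.ne' hn0.ne']

/-- The limit formula for the digamma function of a positive real. -/
lemma digamma_real_limit (v : ℝ) (hv : 0 < v) :
    Tendsto (fun n : ℕ ↦ Real.log n - ∑ k ∈ Finset.range n, 1 / (v + k)) atTop
      (𝓝 (deriv (Real.log ∘ Real.Gamma) v)) := by
  set f : ℝ → ℝ := Real.log ∘ Real.Gamma with hf
  have hc : ConvexOn ℝ (Set.Ioi 0) f := Real.convexOn_log_Gamma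
  have h_rec : ∀ x : ℝ, 0 < x → f (x + 1) = f x + Real.log x := fun x hx => by
    simp only [f, Function.comp_apply, Real.Gamma_add_one hx.ne',
      Real.log_mul hx.ne' (Real.Gamma_pos_of_pos hx).ne', add_comm]
  have hder : ∀ {x : ℝ}, 0 < x → DifferentiableAt ℝ f x := fun {x} hx => by
    refine ((Real.differentiableAt_Gamma ?_).log (Real.Gamma_ne_zero ?_)) <;>
      exact fun m ↦ ne_of_gt (by have := m.cast_nonneg (α := ℝ); linarith)
  have hder_rec : ∀ x : ℝ, 0 < x → deriv f (x + 1) = deriv f x + 1 / x := by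
    intro x hx
    rw [← deriv_comp_add_const, one_div, ← Real.deriv_log,
      ← deriv_add (hder (by positivity)) (Real.differentiableAt_log hx.ne')]
    apply Filter.EventuallyEq.deriv_eq
    filter_upwards [eventually_gt_nhds hx] using h_rec
  have hder_nat : ∀ n : ℕ, deriv f (v + n) = deriv f v + ∑ k ∈ Finset.range n, 1 / (v + k) := by
    intro n
    induction n with
    | zero => simp
    | succ n ih =>
      have h1 : v + (n + 1 : ℕ) = (v + n) + 1 := by push_cast; ring
      rw [h1, hder_rec _ (by positivity), ih, Finset.sum_range_succ]; ring
  have derivUB : ∀ x : ℝ, 0 < x → deriv f x ≤ Real.log x := by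
    intro x hx
    refine (hc.deriv_le_slope (mem_Ioi.mpr hx) (mem_Ioi.mpr (by linarith))
      (by linarith : x < x + 1) (hder hx)).trans (le_of_eq ?_)
    rw [slope_def_field, h_rec x hx]
    field_simp
    ring
  have derivLB : ∀ x : ℝ, 1 < x → Real.log (x - 1) ≤ deriv f x := by
    intro x hx
    refine (le_of_eq ?_).trans (hc.slope_le_deriv (mem_Ioi.mpr (by linarith : (0:ℝ) < x - 1))
      (mem_Ioi.mpr (by linarith)) (by linarith : x - 1 < x) (hder (by linarith)))
    rw [slope_def_field, show x - (x - 1) = 1 by ring, div_one,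
      show x = (x - 1) + 1 by ring, h_rec (x - 1) (by linarith)]
    ring_nf
  have key : Tendsto (fun n : ℕ ↦ deriv f (v + n) - Real.log n) atTop (𝓝 0) := by
    have hup := aux_tendsto_log_sub_log v
    have hlo := aux_tendsto_log_sub_log (v - 1)
    refine tendsto_of_tendsto_of_tendsto_of_le_of_le' hlo hup ?_ ?_
    · filter_upwards [eventually_ge_atTop 1] with n hn
      have h1 : (1:ℝ) < v + n := by
        have : (1:ℝ) ≤ n := by exact_mod_cast hn
        linarith
      have := derivLB (v + n) h1
      have he : v - 1 + n = (v + n) - 1 := by ring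
      rw [he]
      linarith
    · filter_upwards with n
      have := derivUB (v + n) (by positivity)
      linarith
  have heq : (fun n : ℕ ↦ Real.log n - ∑ k ∈ Finset.range n, 1 / (v + k))
      = fun n : ℕ ↦ deriv f v - (deriv f (v + n) - Real.log n) := by
    funext n
    rw [hder_nat n]
    ring
  rw [heq]
  simpa using tendsto_const_nhds.sub key

/-- `v + k ≥ min v 1 * (k+1)`. -/
lemma aux_add_ge (v : ℝ) (hv : 0 < v) (k : ℕ) : min v 1 * (k + 1) ≤ v + k := by
  rcases le_total 1 v with h | h
  · rw [min_eq_right h]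
    have : (0:ℝ) ≤ k := k.cast_nonneg
    nlinarith
  · rw [min_eq_left h]
    have : (0:ℝ) ≤ k := k.cast_nonneg
    nlinarith

lemma aux_summable_sq : Summable (fun k : ℕ ↦ 1 / ((k : ℝ) + 1) ^ 2) := by
  have := (Real.summable_one_div_nat_pow (p := 2)).mpr one_lt_two
  have h2 := (summable_nat_add_iff (f := fun n : ℕ ↦ 1 / (n : ℝ) ^ 2) 1).mpr this
  refine h2.congr fun n => ?_
  push_cast
  ring_nf

lemma aux_summable_c (v : ℝ) (hv : 0 < v) :
    Summable (fun k : ℕ ↦ 1 / ((k : ℝ) + 1) - 1 / (v + k)) := by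
  set μ := min v 1 with hμ
  have hμ0 : 0 < μ := lt_min hv one_pos
  refine Summable.of_norm_bounded
    (g := fun k ↦ (|v - 1| / μ) * (1 / ((k : ℝ) + 1) ^ 2)) (aux_summable_sq.mul_left _) fun k ↦ ?_
  have hk1 : (0:ℝ) < (k : ℝ) + 1 := by positivity
  have hvk : (0:ℝ) < v + k := by positivity
  have heq : 1 / ((k : ℝ) + 1) - 1 / (v + k) = (v - 1) / (((k:ℝ) + 1) * (v + k)) := by
    field_simp
    ring
  have h1 : |(v - 1) / (((k:ℝ) + 1) * (v + k))| = |v - 1| / (((k:ℝ) + 1) * (v + k)) := by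
    rw [abs_div, abs_of_pos (show (0:ℝ) < ((k:ℝ) + 1) * (v + k) by positivity)]
  have h2 : μ * ((k:ℝ) + 1) ^ 2 ≤ ((k:ℝ) + 1) * (v + k) := by
    nlinarith [aux_add_ge v hv k]
  rw [Real.norm_eq_abs, heq, h1]
  have h3 : |v - 1| / (((k:ℝ) + 1) * (v + k)) ≤ |v - 1| / (μ * ((k:ℝ) + 1) ^ 2) :=
    div_le_div_of_nonneg_left (abs_nonneg _) (by positivity) h2
  refine h3.trans (le_of_eq ?_)
  field_simp

/-- The series formula for digamma. -/
lemma digamma_hasSum (v : ℝ) (hv : 0 < v) :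
    HasSum (fun k : ℕ ↦ 1 / ((k : ℝ) + 1) - 1 / (v + k))
      (γ + deriv (Real.log ∘ Real.Gamma) v) := by
  have hsum := aux_summable_c v hv
  have hps : Tendsto (fun n : ℕ ↦ ∑ k ∈ Finset.range n, (1 / ((k:ℝ) + 1) - 1 / (v + k)))
      atTop (𝓝 (γ + deriv (Real.log ∘ Real.Gamma) v)) := by
    have h1 := Real.tendsto_harmonic_sub_log
    have h2 := digamma_real_limit v hv
    have h3 := h1.add h2
    refine h3.congr fun n => ?_
    rw [Finset.sum_sub_distrib]
    have : ((harmonic n : ℝ)) = ∑ k ∈ Finset.range n, 1 / ((k:ℝ) + 1) := by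
      rw [harmonic]
      push_cast
      simp [one_div]
    rw [← this]
    ring
  have h4 := hsum.hasSum.tendsto_sum_nat
  have := tendsto_nhds_unique h4 hps
  rw [← this]
  exact hsum.hasSum

lemma aux_hasDerivAt_complex_of_real {f : ℂ → ℂ} {g : ℝ → ℝ} {g' s : ℝ}
    (hf : DifferentiableAt ℂ f s) (hg : HasDerivAt g g' s) (hfg : ∀ s : ℝ, f ↑s = ↑(g s)) :
    HasDerivAt f ↑g' s := by
  refine HasDerivAt.congr_deriv hf.hasDerivAt ?_
  rw [← (funext hfg ▸ hf.hasDerivAt.comp_ofReal.deriv :)]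
  exact hg.ofReal_comp.deriv

lemma digamma_ofReal (v : ℝ) (hv : 0 < v) :
    _root_.digamma ↑v = ((deriv (Real.log ∘ Real.Gamma) v : ℝ) : ℂ) := by
  have hne : ∀ m : ℕ, v ≠ -(m : ℝ) := fun m h => by
    have := m.cast_nonneg (α := ℝ); linarith
  have hdG : DifferentiableAt ℝ Real.Gamma v := Real.differentiableAt_Gamma hne
  have hGpos : 0 < Real.Gamma v := Real.Gamma_pos_of_pos hv
  have hdC : DifferentiableAt ℂ Complex.Gamma ↑v := by
    refine Complex.differentiableAt_Gamma _ fun m => ?_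
    rw [← Complex.ofReal_natCast, ← Complex.ofReal_neg, Ne, Complex.ofReal_inj]
    exact hne m
  have hD : HasDerivAt Complex.Gamma ↑(deriv Real.Gamma v) ↑v :=
    aux_hasDerivAt_complex_of_real hdC hdG.hasDerivAt Complex.Gamma_ofReal
  have h1 : deriv (Real.log ∘ Real.Gamma) v = deriv Real.Gamma v / Real.Gamma v := by
    rw [Function.comp_def, deriv.log hdG hGpos.ne']
  rw [_root_.digamma, hD.deriv, h1, Complex.Gamma_ofReal, Complex.ofReal_div]

lemma hzeta_hasSum (v : ℝ) (hv : 0 < v) {s : ℂ} (hs : 1 < s.re) :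
    HasSum (fun n : ℕ ↦ 1 / ((n : ℂ) + (v : ℂ)) ^ s) (hzeta s v) := by
  have ha : Int.fract v ∈ Set.Icc (0:ℝ) 1 := ⟨Int.fract_nonneg v, (Int.fract_lt_one v).le⟩
  have h0 := HurwitzZeta.hasSum_hurwitzZeta_of_one_lt_re ha hs
  have h1 : HasSum (fun n : ℕ ↦ 1 / (((n + ⌊v⌋₊ : ℕ) : ℂ) + ((Int.fract v : ℝ) : ℂ)) ^ s)
      (hzeta s v) := by
    have heq : hzeta s v = HurwitzZeta.hurwitzZeta (↑(Int.fract v)) s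
        - ∑ m ∈ Finset.range ⌊v⌋₊, 1 / ((m : ℂ) + ((Int.fract v : ℝ) : ℂ)) ^ s := by
      rw [hzeta]
      congr 1
      exact Finset.sum_congr rfl fun m _ => by rw [cpow_neg, one_div]
    rw [heq]
    exact (hasSum_nat_add_iff' ⌊v⌋₊).mpr h0
  have hNv : ((⌊v⌋₊ : ℝ) + Int.fract v) = v := by
    rw [natCast_floor_eq_intCast_floor hv.le, Int.floor_add_fract]
  have hfun : (fun n : ℕ ↦ 1 / (((n + ⌊v⌋₊ : ℕ) : ℂ) + ((Int.fract v : ℝ) : ℂ)) ^ s)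
      = fun n : ℕ ↦ 1 / ((n : ℂ) + (v : ℂ)) ^ s := by
    funext n
    have hb : ((n + ⌊v⌋₊ : ℕ) : ℂ) + ((Int.fract v : ℝ) : ℂ) = (n : ℂ) + (v : ℂ) := by
      calc ((n + ⌊v⌋₊ : ℕ) : ℂ) + ((Int.fract v : ℝ) : ℂ)
          = (n : ℂ) + ((((⌊v⌋₊ : ℝ) + Int.fract v : ℝ)) : ℂ) := by push_cast; ring
      _ = (n : ℂ) + (v : ℂ) := by rw [hNv]
    rw [hb]
  rw [← hfun]
  exact h1

lemma aux_summable_rpow (v : ℝ) (hv : 0 < v) {s : ℝ} (hs : 1 < s) :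
    Summable (fun n : ℕ ↦ ((n : ℝ) + v) ^ (-s)) := by
  set μ := min v 1 with hμ
  have hμ0 : 0 < μ := lt_min hv one_pos
  have hbase : Summable (fun n : ℕ ↦ ((n : ℝ) + 1) ^ (-s)) := by
    have h1 : Summable (fun n : ℕ ↦ (n : ℝ) ^ (-s)) :=
      Real.summable_nat_rpow.mpr (by linarith)
    have h2 := (summable_nat_add_iff (f := fun n : ℕ ↦ (n : ℝ) ^ (-s)) 1).mpr h1
    exact h2.congr fun n => by push_cast; ring_nf
  refine Summable.of_nonneg_of_le (fun n => Real.rpow_nonneg (by positivity) _)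
    (fun n => ?_) (hbase.mul_left (μ ^ (-s)))
  have hle : μ * ((n : ℝ) + 1) ≤ (n : ℝ) + v := by
    have := aux_add_ge v hv n
    linarith [aux_add_ge v hv n]
  have h3 : ((n : ℝ) + v) ^ (-s) ≤ (μ * ((n : ℝ) + 1)) ^ (-s) :=
    Real.antitoneOn_rpow_Ioi_of_exponent_nonpos (by linarith)
      (Set.mem_Ioi.mpr (by positivity)) (Set.mem_Ioi.mpr (by positivity)) hle
  refine h3.trans (le_of_eq ?_)
  rw [Real.mul_rpow hμ0.le (by positivity)]

lemma hzeta_real (v : ℝ) (hv : 0 < v) {s : ℝ} (hs : 1 < s) :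
    hzeta ↑s v = ((∑' n : ℕ, ((n : ℝ) + v) ^ (-s) : ℝ) : ℂ) := by
  have hsummable := aux_summable_rpow v hv hs
  have h2 : HasSum (fun n : ℕ ↦ ((((n : ℝ) + v) ^ (-s) : ℝ) : ℂ))
      ((∑' n : ℕ, ((n : ℝ) + v) ^ (-s) : ℝ) : ℂ) :=
    Complex.hasSum_ofReal.mpr hsummable.hasSum
  have h1 := hzeta_hasSum v hv (s := (s : ℂ)) (by simpa using hs)
  have hfun : (fun n : ℕ ↦ ((((n : ℝ) + v) ^ (-s) : ℝ) : ℂ))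
      = fun n : ℕ ↦ 1 / ((n : ℂ) + (v : ℂ)) ^ (s : ℂ) := by
    funext n
    rw [Complex.ofReal_cpow (by positivity) (-s)]
    push_cast
    rw [cpow_neg, one_div]
  rw [hfun] at h2
  exact h1.unique h2

lemma hzeta_one_eq (s : ℂ) (hs : s ≠ 0) : hzeta s 1 = riemannZeta s := by
  rw [hzeta]
  have hfr : Int.fract (1 : ℝ) = 0 := Int.fract_one
  have hfl : ⌊(1 : ℝ)⌋₊ = 1 := Nat.floor_one
  rw [hfr, hfl]
  rw [Finset.sum_range_one]
  push_cast
  rw [add_zero, Complex.zero_cpow (neg_ne_zero.mpr hs), sub_zero]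
  exact congrFun HurwitzZeta.hurwitzZeta_zero s

lemma aux_rpow_diff_bound {s μ m x y : ℝ} (hs1 : 1 < s) (hs2 : s ≤ 2) (hμ0 : 0 < μ)
    (hμ1 : μ ≤ 1) (hm : μ ≤ m) (hx : m ≤ x) (hy : m ≤ y) :
    |x ^ (-s) - y ^ (-s)| ≤ 2 / μ * m ^ (-(2:ℝ)) * |x - y| := by
  have hm0 : 0 < m := lt_of_lt_of_le hμ0 hm
  have key : ∀ t ∈ Set.Ici m, ‖(-s) * t ^ (-s - 1)‖ ≤ 2 / μ * m ^ (-(2:ℝ)) := by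
    intro t ht
    have ht0 : 0 < t := lt_of_lt_of_le hm0 ht
    rw [Real.norm_eq_abs, abs_mul, abs_neg, abs_of_pos (by linarith : (0:ℝ) < s),
      abs_of_pos (Real.rpow_pos_of_pos ht0 _)]
    have h1 : t ^ (-s - 1) ≤ m ^ (-s - 1) :=
      Real.antitoneOn_rpow_Ioi_of_exponent_nonpos (by linarith) (Set.mem_Ioi.mpr hm0)
        (Set.mem_Ioi.mpr ht0) ht
    have h2 : m ^ (-s - 1) = m ^ (-(2:ℝ)) * m ^ (1 - s) := by
      rw [← Real.rpow_add hm0]; ring_nf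
    have h3 : m ^ (1 - s) ≤ μ ^ (1 - s) :=
      Real.antitoneOn_rpow_Ioi_of_exponent_nonpos (by linarith) (Set.mem_Ioi.mpr hμ0)
        (Set.mem_Ioi.mpr hm0) hm
    have h4 : μ ^ (1 - s) ≤ μ ^ (-(1:ℝ)) :=
      Real.rpow_le_rpow_of_exponent_ge hμ0 hμ1 (by linarith)
    have h5 : t ^ (-s - 1) ≤ m ^ (-(2:ℝ)) * μ ^ (-(1:ℝ)) := by
      rw [h2] at h1
      refine h1.trans ?_
      exact mul_le_mul_of_nonneg_left (h3.trans h4) (Real.rpow_nonneg hm0.le _)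
    have h6 : s * t ^ (-s - 1) ≤ 2 * (m ^ (-(2:ℝ)) * μ ^ (-(1:ℝ))) := by
      have ht1 : 0 ≤ t ^ (-s - 1) := Real.rpow_nonneg ht0.le _
      have := mul_le_mul hs2 h5 ht1 (by norm_num)
      linarith
    refine h6.trans (le_of_eq ?_)
    rw [Real.rpow_neg_one]
    field_simp
  have hmvt := (convex_Ici m).norm_image_sub_le_of_norm_hasDerivWithin_le
    (f := fun t : ℝ ↦ t ^ (-s)) (f' := fun t ↦ (-s) * t ^ (-s - 1))
    (fun t ht => (Real.hasDerivAt_rpow_const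
      (Or.inl (lt_of_lt_of_le hm0 ht).ne')).hasDerivWithinAt) key hy hx
  simpa [Real.norm_eq_abs, abs_sub_comm] using hmvt

lemma aux_tannery (v : ℝ) (hv : 0 < v) :
    Tendsto (fun j : ℕ ↦ ∑' n : ℕ, (((n:ℝ) + v) ^ (-(1 + ((j:ℝ) + 1)⁻¹))
        - ((n:ℝ) + 1) ^ (-(1 + ((j:ℝ) + 1)⁻¹)))) atTop
      (𝓝 (∑' n : ℕ, (((n:ℝ) + v) ^ (-(1:ℝ)) - ((n:ℝ) + 1) ^ (-(1:ℝ))))) := by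
  set μ := min v 1 with hμdef
  have hμ0 : 0 < μ := lt_min hv one_pos
  have hμ1 : μ ≤ 1 := min_le_right v 1
  apply tendsto_tsum_of_dominated_convergence
    (bound := fun n : ℕ ↦ 2 / μ * ((n:ℝ) + μ) ^ (-(2:ℝ)) * |v - 1|)
  · exact ((aux_summable_rpow μ hμ0 one_lt_two).mul_left (2 / μ)).mul_right (|v - 1|)
  · intro k
    have hsj : Tendsto (fun j : ℕ ↦ -(1 + ((j:ℝ) + 1)⁻¹)) atTop (𝓝 (-(1:ℝ))) := by
      have h1 : Tendsto (fun j : ℕ ↦ ((j:ℝ) + 1)⁻¹) atTop (𝓝 0) := by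
        simpa [one_div] using tendsto_one_div_add_atTop_nhds_zero_nat (𝕜 := ℝ)
      have h2 := (h1.const_add 1).neg
      simpa using h2
    have hA : Tendsto (fun j : ℕ ↦ ((k:ℝ) + v) ^ (-(1 + ((j:ℝ) + 1)⁻¹))) atTop
        (𝓝 (((k:ℝ) + v) ^ (-(1:ℝ)))) :=
      ((Real.continuousAt_const_rpow (by positivity : ((k:ℝ) + v) ≠ 0)).tendsto).comp hsj
    have hB : Tendsto (fun j : ℕ ↦ ((k:ℝ) + 1) ^ (-(1 + ((j:ℝ) + 1)⁻¹))) atTop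
        (𝓝 (((k:ℝ) + 1) ^ (-(1:ℝ)))) :=
      ((Real.continuousAt_const_rpow (by positivity : ((k:ℝ) + 1) ≠ 0)).tendsto).comp hsj
    exact hA.sub hB
  · filter_upwards with j k
    have hs1 : 1 < 1 + ((j:ℝ) + 1)⁻¹ := by
      have : (0:ℝ) < ((j:ℝ) + 1)⁻¹ := by positivity
      linarith
    have hs2 : 1 + ((j:ℝ) + 1)⁻¹ ≤ 2 := by
      have h1 : ((j:ℝ) + 1)⁻¹ ≤ 1 := by
        rw [inv_le_one_iff₀]
        right
        have : (0:ℝ) ≤ j := j.cast_nonneg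
        linarith
      linarith
    have hb := aux_rpow_diff_bound (s := 1 + ((j:ℝ) + 1)⁻¹) (μ := μ) (m := (k:ℝ) + μ)
      (x := (k:ℝ) + v) (y := (k:ℝ) + 1) hs1 hs2 hμ0 hμ1
      (by have : (0:ℝ) ≤ k := k.cast_nonneg; linarith)
      (by have := min_le_left v 1; linarith)
      (by linarith)
    rw [Real.norm_eq_abs]
    refine hb.trans (le_of_eq ?_)
    rw [show (k:ℝ) + v - ((k:ℝ) + 1) = v - 1 by ring]

theorem hurwitzZeta_sub_pole_tendsto (v : ℝ) (hv : 0 < v) :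
    Tendsto (fun b : ℂ => hzeta (b + 1) v - 1 / b) (nhdsWithin 0 {0}ᶜ)
      (nhds (-_root_.digamma v)) := by
  set d : ℝ := deriv (Real.log ∘ Real.Gamma) v with hd
  set D : ℂ → ℂ := fun s => hzeta s v - riemannZeta s with hD
  have hDdiff : DifferentiableAt ℂ D 1 := by
    have h1 : DifferentiableAt ℂ
        (fun s : ℂ => HurwitzZeta.hurwitzZeta (↑(Int.fract v)) s - riemannZeta s) 1 := by
      have h := HurwitzZeta.differentiable_hurwitzZeta_sub_hurwitzZeta
        (↑(Int.fract v) : UnitAddCircle) 0 1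
      have h0 : HurwitzZeta.hurwitzZeta (0 : UnitAddCircle) = riemannZeta :=
        HurwitzZeta.hurwitzZeta_zero
      rw [h0] at h
      exact h
    have h2 : DifferentiableAt ℂ
        (fun s : ℂ => ∑ m ∈ Finset.range ⌊v⌋₊,
          ((m : ℂ) + ((Int.fract v : ℝ) : ℂ)) ^ (-s)) 1 := by
      refine DifferentiableAt.fun_sum fun m _ => ?_
      exact (differentiableAt_id.neg).const_cpow (Or.inr (by norm_num))
    have heq : D = fun s : ℂ =>
        (HurwitzZeta.hurwitzZeta (↑(Int.fract v)) s - riemannZeta s) -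
          ∑ m ∈ Finset.range ⌊v⌋₊, ((m : ℂ) + ((Int.fract v : ℝ) : ℂ)) ^ (-s) := by
      funext s
      rw [hD]
      simp only [hzeta]
      ring
    rw [heq]
    exact h1.sub h2
  have hseq : Tendsto (fun j : ℕ ↦ (((1 + ((j:ℝ) + 1)⁻¹ : ℝ)) : ℂ)) atTop (𝓝 1) := by
    have h1 : Tendsto (fun j : ℕ ↦ (1 + ((j:ℝ) + 1)⁻¹ : ℝ)) atTop (𝓝 1) := by
      have h2 : Tendsto (fun j : ℕ ↦ ((j:ℝ) + 1)⁻¹) atTop (𝓝 0) := by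
        simpa [one_div] using tendsto_one_div_add_atTop_nhds_zero_nat (𝕜 := ℝ)
      simpa using h2.const_add 1
    exact ((Complex.continuous_ofReal.tendsto 1).comp h1).congr fun j => rfl
  have hDseq : Tendsto (fun j : ℕ ↦ D (((1 + ((j:ℝ) + 1)⁻¹ : ℝ)) : ℂ)) atTop (𝓝 (D 1)) :=
    (hDdiff.continuousAt.tendsto).comp hseq
  have hexpr : ∀ j : ℕ, D (((1 + ((j:ℝ) + 1)⁻¹ : ℝ)) : ℂ)
      = ((∑' n : ℕ, (((n:ℝ) + v) ^ (-(1 + ((j:ℝ) + 1)⁻¹))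
          - ((n:ℝ) + 1) ^ (-(1 + ((j:ℝ) + 1)⁻¹))) : ℝ) : ℂ) := by
    intro j
    have hsj : (1:ℝ) < 1 + ((j:ℝ) + 1)⁻¹ := by
      have : (0:ℝ) < ((j:ℝ) + 1)⁻¹ := by positivity
      linarith
    have hzv := hzeta_real v hv hsj
    have hz1 := hzeta_real 1 one_pos hsj
    have hone : hzeta (((1 + ((j:ℝ) + 1)⁻¹ : ℝ)) : ℂ) 1
        = riemannZeta (((1 + ((j:ℝ) + 1)⁻¹ : ℝ)) : ℂ) :=
      hzeta_one_eq _ (Complex.ofReal_ne_zero.mpr (by positivity))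
    have htsub := Summable.tsum_sub (aux_summable_rpow v hv hsj) (aux_summable_rpow 1 one_pos hsj)
    rw [hD]
    simp only
    rw [← hone, hzv, hz1]
    rw [← Complex.ofReal_sub]
    congr 1
    rw [← htsub]
  have hT := aux_tannery v hv
  have hD1 : D 1 = ((∑' n : ℕ, (((n:ℝ) + v) ^ (-(1:ℝ)) - ((n:ℝ) + 1) ^ (-(1:ℝ))) : ℝ) : ℂ) := by
    have h5 := (Complex.continuous_ofReal.tendsto _).comp hT
    have h6 := hDseq.congr hexpr
    exact tendsto_nhds_unique h6 h5
  have hTval : (∑' n : ℕ, (((n:ℝ) + v) ^ (-(1:ℝ)) - ((n:ℝ) + 1) ^ (-(1:ℝ)))) = -(γ + d) := by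
    have hneg := (digamma_hasSum v hv).neg
    have heq2 : (fun n : ℕ ↦ ((n:ℝ) + v) ^ (-(1:ℝ)) - ((n:ℝ) + 1) ^ (-(1:ℝ)))
        = fun n : ℕ ↦ -(1 / ((n:ℝ) + 1) - 1 / (v + n)) := by
      funext n
      rw [Real.rpow_neg_one, Real.rpow_neg_one]
      rw [one_div, one_div, add_comm v (n:ℝ)]
      ring
    rw [heq2]
    exact hneg.tsum_eq
  have h1 : Tendsto (fun b : ℂ => b + 1) (nhdsWithin 0 {0}ᶜ) (nhdsWithin 1 {1}ᶜ) := by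
    refine Tendsto.inf ?_ (tendsto_principal_principal.mpr ?_)
    · simpa using (continuous_add_right (1:ℂ)).tendsto (0 : ℂ)
    · intro x hx
      simp only [Set.mem_compl_iff, Set.mem_singleton_iff] at hx ⊢
      intro h
      exact hx (by linear_combination h)
  have hA : Tendsto (fun b : ℂ => D (b + 1)) (nhdsWithin 0 {0}ᶜ) (𝓝 (D 1)) :=
    (hDdiff.continuousAt.tendsto).comp (h1.mono_right nhdsWithin_le_nhds)
  have hB : Tendsto (fun b : ℂ => riemannZeta (b + 1) - 1 / ((b + 1) - 1))
      (nhdsWithin 0 {0}ᶜ) (𝓝 ↑γ) :=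
    tendsto_riemannZeta_sub_one_div.comp h1
  have hsum := hA.add hB
  have hfun : (fun b : ℂ => D (b + 1) + (riemannZeta (b + 1) - 1 / ((b + 1) - 1)))
      = fun b : ℂ => hzeta (b + 1) v - 1 / b := by
    funext b
    simp only [hD]
    rw [add_sub_cancel_right]
    ring
  rw [hfun] at hsum
  have hval : -_root_.digamma ↑v = D 1 + ↑γ := by
    rw [digamma_ofReal v hv, hD1, hTval, ← hd]
    push_cast
    ring
  rw [hval]
  exact hsum
end

section
/- For a > 0, b ≥ 0, and complex s with Re(s) > 0, ∫₀^∞ e^{−at} cos(bt) t^{s−1} dt = Γ(s) · cos(s·arctan(b/a)) / (a² + b²)^{s/2}. -/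
open Complex MeasureTheory Set Real Filter

lemma aux_meas (s c : ℂ) :
    AEStronglyMeasurable (fun t : ℝ => (t : ℂ) ^ (s - 1) * Complex.exp (-(c * t)))
      (volume.restrict (Ioi 0)) := by
  apply ContinuousOn.aestronglyMeasurable _ measurableSet_Ioi
  intro t ht
  exact ((continuousAt_ofReal_cpow_const t _ (Or.inr (ne_of_gt ht))).mul
    ((Complex.continuous_exp.comp
      ((continuous_const.mul Complex.continuous_ofReal).neg)).continuousAt)).continuousWithinAt

lemma aux_meas' (s c : ℂ) :
    AEStronglyMeasurable (fun t : ℝ => (t : ℂ) ^ (s - 1) * (Complex.exp (-(c * t)) * (-(t:ℂ))))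
      (volume.restrict (Ioi 0)) := by
  apply ContinuousOn.aestronglyMeasurable _ measurableSet_Ioi
  intro t ht
  exact ((continuousAt_ofReal_cpow_const t _ (Or.inr (ne_of_gt ht))).mul
    (((Complex.continuous_exp.comp
      ((continuous_const.mul Complex.continuous_ofReal).neg)).mul
      Complex.continuous_ofReal.neg).continuousAt)).continuousWithinAt

lemma aux_norm (s c : ℂ) {t : ℝ} (ht : 0 < t) :
    ‖(t : ℂ) ^ (s - 1) * Complex.exp (-(c * t))‖ = t ^ (s.re - 1) * Real.exp (-c.re * t) := by
  rw [norm_mul, Complex.norm_exp,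
    Complex.norm_cpow_eq_rpow_re_of_pos ht, sub_re, one_re]
  congr 2
  simp [Complex.neg_re, Complex.mul_re]

lemma aux_bound_integrable {p b : ℝ} (hp : -1 < p) (hb : 0 < b) :
    IntegrableOn (fun t : ℝ => t ^ p * Real.exp (-b * t)) (Ioi 0) := by
  have := integrableOn_rpow_mul_exp_neg_mul_rpow hp zero_lt_one hb
  simpa [Real.rpow_one] using this

lemma aux_integrable (s : ℂ) (hs : 0 < s.re) {c : ℂ} (hc : 0 < c.re) :
    IntegrableOn (fun t : ℝ => (t : ℂ) ^ (s - 1) * Complex.exp (-(c * t))) (Ioi 0) := by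
  refine (aux_bound_integrable (p := s.re - 1) (b := c.re) (by linarith) hc).mono'
    (aux_meas s c) ?_
  filter_upwards [ae_restrict_mem measurableSet_Ioi] with t ht
  rw [aux_norm s c ht]

lemma key (s : ℂ) (hs : 0 < s.re) {c : ℂ} (hc : 0 < c.re) :
    (∫ t in Ioi (0 : ℝ), (t : ℂ) ^ (s - 1) * Complex.exp (-(c * t)))
      = Complex.Gamma s / c ^ s := by
  set U : Set ℂ := {z | 0 < z.re} with hU
  have hU_open : IsOpen U := isOpen_lt continuous_const Complex.continuous_re
  have hU_conn : IsPreconnected U := (convex_halfSpace_re_gt 0).isPreconnected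
  set F : ℂ → ℂ := fun c => ∫ t in Ioi (0 : ℝ), (t : ℂ) ^ (s - 1) * Complex.exp (-(c * t))
    with hF_def
  set G : ℂ → ℂ := fun c => Complex.Gamma s / c ^ s with hG_def
  have hF : DifferentiableOn ℂ F U := by
    intro c₀ hc₀
    have hc₀' : 0 < c₀.re := hc₀
    set ε := c₀.re / 2 with hε
    have hε_pos : 0 < ε := by positivity
    have hre : ∀ c ∈ Metric.ball c₀ ε, ε < c.re := by
      intro c hc
      have h' : |(c - c₀).re| ≤ ‖c - c₀‖ := Complex.abs_re_le_norm _
      rw [Metric.mem_ball, Complex.dist_eq] at hc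
      rw [Complex.sub_re] at h'
      have h2 := abs_lt.mp (h'.trans_lt hc)
      simp only [hε] at *
      linarith [h2.1]
    have key := hasDerivAt_integral_of_dominated_loc_of_deriv_le (hs := Metric.ball_mem_nhds c₀ hε_pos)
      (F := fun c (t : ℝ) => (t : ℂ) ^ (s - 1) * Complex.exp (-(c * t)))
      (F' := fun c (t : ℝ) => (t : ℂ) ^ (s - 1) * (Complex.exp (-(c * t)) * (-(t:ℂ))))
      (bound := fun t : ℝ => t ^ s.re * Real.exp (-ε * t))
      (μ := volume.restrict (Ioi 0)) (x₀ := c₀)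
      (Filter.Eventually.of_forall fun c => aux_meas s c)
      (aux_integrable s hs hc₀')
      (aux_meas' s c₀)
      ?_ (aux_bound_integrable (by linarith) hε_pos) ?_
    · exact (key.2.differentiableAt).differentiableWithinAt
    · filter_upwards [ae_restrict_mem measurableSet_Ioi] with t ht c hc
      have ht' : (0:ℝ) < t := ht
      have e1 : ‖(t:ℂ)^(s-1)‖ = t ^ (s.re - 1) := by
        rw [Complex.norm_cpow_eq_rpow_re_of_pos ht', sub_re, one_re]
      have e2 : ‖Complex.exp (-(c*(t:ℂ)))‖ = Real.exp (-c.re * t) := by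
        rw [Complex.norm_exp]
        congr 1
        simp [Complex.mul_re]
      have e3 : ‖(-(t:ℂ))‖ = t := by
        rw [norm_neg, Complex.norm_real, Real.norm_of_nonneg ht'.le]
      have hnorm : ‖(t:ℂ)^(s-1) * (Complex.exp (-(c*t)) * (-(t:ℂ)))‖
          = t ^ (s.re - 1) * (Real.exp (-c.re * t) * t) := by
        rw [norm_mul, norm_mul, e1, e2, e3]
      rw [hnorm]
      have h1 : Real.exp (-c.re * t) ≤ Real.exp (-ε * t) := by
        apply Real.exp_le_exp.mpr
        nlinarith [hre c hc]
      have h2 : t ^ (s.re - 1) * t = t ^ s.re := by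
        rw [Real.rpow_sub_one ht'.ne', div_mul_cancel₀ _ ht'.ne']
      calc t ^ (s.re - 1) * (Real.exp (-c.re * t) * t)
          = t ^ s.re * Real.exp (-c.re * t) := by rw [← h2]; ring
        _ ≤ t ^ s.re * Real.exp (-ε * t) := by
            apply mul_le_mul_of_nonneg_left h1 (Real.rpow_nonneg ht'.le _)
    · filter_upwards [ae_restrict_mem measurableSet_Ioi] with t ht c hc
      have h1 : HasDerivAt (fun c : ℂ => -(c * (t:ℂ))) (-(t:ℂ)) c := by
        simpa using ((hasDerivAt_id c).mul_const ((t:ℝ):ℂ)).fun_neg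
      exact (h1.cexp).const_mul _
  have hG : DifferentiableOn ℂ G U := by
    intro c hc
    have hc' : 0 < c.re := hc
    have hcz : c ≠ 0 := fun h => by rw [h] at hc'; simp at hc'
    have hder : DifferentiableAt ℂ (fun z : ℂ => z ^ s) c := by
      apply DifferentiableAt.cpow differentiableAt_id (differentiableAt_const s)
      exact Or.inl hc'
    have hne : c ^ s ≠ 0 := by
      rw [Ne, Complex.cpow_eq_zero_iff, not_and_or]
      exact Or.inl hcz
    exact ((differentiableAt_const _).div hder hne).differentiableWithinAt
  have h1U : (1 : ℂ) ∈ U := by simp [hU]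
  have heq_real : ∀ r : ℝ, 0 < r → F r = G r := by
    intro r hr
    have harg : ((r:ℂ)).arg ≠ π := by
      rw [Complex.arg_ofReal_of_nonneg hr.le]
      exact Real.pi_ne_zero.symm
    rw [hF_def, hG_def]
    simp only
    rw [Complex.integral_cpow_mul_exp_neg_mul_Ioi hs hr, one_div,
      Complex.inv_cpow _ _ harg, mul_comm, div_eq_mul_inv]
  have hfreq : ∃ᶠ z in nhdsWithin (1 : ℂ) {(1:ℂ)}ᶜ, F z = G z := by
    have hu : Filter.Tendsto (fun n : ℕ => ((1 + 1 / ((n:ℝ) + 1) : ℝ) : ℂ)) Filter.atTop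
        (nhdsWithin (1 : ℂ) {(1:ℂ)}ᶜ) := by
      rw [tendsto_nhdsWithin_iff]
      constructor
      · have h : Filter.Tendsto (fun n : ℕ => (1 + 1 / ((n : ℝ) + 1) : ℝ)) Filter.atTop
            (nhds 1) := by
          simpa using (tendsto_const_nhds (x := (1:ℝ))).add tendsto_one_div_add_atTop_nhds_zero_nat
        have h2 := (Complex.continuous_ofReal.tendsto 1).comp h
        simpa [Function.comp_def, one_div] using h2
      · apply Filter.Eventually.of_forall
        intro n
        simp only [mem_compl_iff, mem_singleton_iff]
        intro h
        have h3 : (1 + 1 / ((n : ℝ) + 1) : ℝ) = 1 := by exact_mod_cast h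
        have hn : (0:ℝ) < 1 / ((n:ℝ) + 1) := by positivity
        linarith
    exact hu.frequently (Filter.Frequently.of_forall fun n => heq_real _ (by positivity))
  exact (hF.analyticOnNhd hU_open).eqOn_of_preconnected_of_frequently_eq
    (hG.analyticOnNhd hU_open) hU_conn h1U hfreq hc

theorem euler_integral (a b : ℝ) (s : ℂ) (ha : 0 < a) (hb : 0 ≤ b) (hs : 0 < s.re) :
    ∫ t in Ioi (0 : ℝ), Complex.exp (-((a : ℂ) * t)) * Complex.cos ((b : ℂ) * t) *
        (t : ℂ) ^ (s - 1) =
      Complex.Gamma s * Complex.cos (s * (Real.arctan (b / a) : ℂ)) /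
        ((a ^ 2 + b ^ 2 : ℝ) : ℂ) ^ (s / 2) := by
  set c₁ : ℂ := (a:ℂ) - (b:ℂ)*I with hc₁_def
  set c₂ : ℂ := (a:ℂ) + (b:ℂ)*I with hc₂_def
  have hre1 : c₁.re = a := by simp [hc₁_def]
  have hre2 : c₂.re = a := by simp [hc₂_def]
  have him2 : c₂.im = b := by simp [hc₂_def]
  have hc₁ : 0 < c₁.re := by rw [hre1]; exact ha
  have hc₂ : 0 < c₂.re := by rw [hre2]; exact ha
  have hsplit : ∀ t ∈ Ioi (0:ℝ),
      Complex.exp (-((a:ℂ)*t)) * Complex.cos ((b:ℂ)*t) * (t:ℂ)^(s-1)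
      = (1/2 : ℂ) * ((t:ℂ)^(s-1) * Complex.exp (-(c₁*t))
          + (t:ℂ)^(s-1) * Complex.exp (-(c₂*t))) := by
    intro t _
    have h1 : Complex.exp (-(c₁*(t:ℂ)))
        = Complex.exp (-((a:ℂ)*t)) * Complex.exp ((b:ℂ)*t*I) := by
      rw [← Complex.exp_add]
      congr 1
      rw [hc₁_def]; ring
    have h2 : Complex.exp (-(c₂*(t:ℂ)))
        = Complex.exp (-((a:ℂ)*t)) * Complex.exp (-((b:ℂ)*t)*I) := by
      rw [← Complex.exp_add]
      congr 1
      rw [hc₂_def]; ring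
    rw [h1, h2, Complex.cos]
    ring
  rw [setIntegral_congr_fun measurableSet_Ioi hsplit, MeasureTheory.integral_const_mul,
    integral_add (aux_integrable s hs hc₁) (aux_integrable s hs hc₂),
    key s hs hc₁, key s hs hc₂]
  -- now pure algebra
  have hw0 : c₂ ≠ 0 := by
    intro h
    rw [h] at hre2
    simp at hre2
    exact ha.ne hre2
  have hw1 : c₁ ≠ 0 := by
    intro h
    rw [h] at hre1
    simp at hre1
    exact ha.ne hre1
  set θ : ℝ := c₂.arg with hθ_def
  have hθlt : θ < π / 2 := Complex.arg_lt_pi_div_two_iff.mpr (Or.inl hc₂)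
  have hθgt : -(π/2) < θ := Complex.neg_pi_div_two_lt_arg_iff.mpr (Or.inl hc₂)
  have harctan : Real.arctan (b / a) = θ := by
    have ht : Real.tan θ = b / a := by
      rw [hθ_def, Complex.tan_arg, him2, hre2]
    rw [← ht, Real.arctan_tan hθgt hθlt]
  have hargπ : c₂.arg ≠ π := by
    intro h
    rw [← hθ_def] at h
    rw [h] at hθlt
    linarith [Real.pi_pos]
  set L : ℂ := (Real.log ‖c₂‖ : ℂ) with hL_def
  have hlog : Complex.log c₂ = L + (θ:ℂ)*I := by
    apply Complex.ext <;>
      simp [Complex.log_re, Complex.log_im, hL_def, hθ_def]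
  have hlog1 : Complex.log c₁ = L - (θ:ℂ)*I := by
    have hconj : (starRingEnd ℂ) c₂ = c₁ := by
      rw [hc₁_def, hc₂_def, map_add, map_mul, Complex.conj_I, Complex.conj_ofReal,
        Complex.conj_ofReal]
      ring
    rw [← hconj, Complex.log_conj _ hargπ, hlog, map_add, map_mul, Complex.conj_I, hL_def]
    simp [sub_eq_add_neg, mul_comm]
  have hc2pow : c₂ ^ s = Complex.exp ((L + (θ:ℂ)*I) * s) := by
    rw [Complex.cpow_def_of_ne_zero hw0, hlog]
  have hc1pow : c₁ ^ s = Complex.exp ((L - (θ:ℂ)*I) * s) := by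
    rw [Complex.cpow_def_of_ne_zero hw1, hlog1]
  -- denominator
  have habs : ‖c₂‖ = Real.sqrt (a^2 + b^2) := by
    rw [Complex.norm_def, Complex.normSq_apply, hre2, him2]
    ring_nf
  have hab_pos : 0 < a^2 + b^2 := by positivity
  have hLL : ((Real.log (a^2+b^2) : ℝ) : ℂ) = 2 * L := by
    rw [hL_def, habs, Real.log_sqrt hab_pos.le]
    push_cast
    ring
  have hden : ((a^2 + b^2 : ℝ) : ℂ) ^ (s/2) = Complex.exp (s * L) := by
    rw [Complex.cpow_def_of_ne_zero (by exact_mod_cast hab_pos.ne'),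
      ← Complex.ofReal_log hab_pos.le, hLL]
    congr 1
    ring
  rw [hden, harctan]
  have d1 : Complex.Gamma s / c₁ ^ s
      = Complex.Gamma s * Complex.exp (-(s*L)) * Complex.exp (s*(θ:ℂ)*I) := by
    rw [hc1pow, div_eq_mul_inv, ← Complex.exp_neg,
      show -((L - (θ:ℂ)*I) * s) = -(s*L) + s*(θ:ℂ)*I from by ring, Complex.exp_add]
    ring
  have d2 : Complex.Gamma s / c₂ ^ s
      = Complex.Gamma s * Complex.exp (-(s*L)) * Complex.exp (-(s*(θ:ℂ))*I) := by
    rw [hc2pow, div_eq_mul_inv, ← Complex.exp_neg,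
      show -((L + (θ:ℂ)*I) * s) = -(s*L) + -(s*(θ:ℂ))*I from by ring, Complex.exp_add]
    ring
  rw [d1, d2, Complex.cos, div_eq_mul_inv (Complex.Gamma s * _), ← Complex.exp_neg]
  ring
end

section
/- For real b > 0 and complex s with 0 < Re(s) < 1, the improper integral ∫₀^∞ cos(bt) · t^{s−1} dt equals cos(πs/2) · b^{−s} · Γ(s). -/
open Complex MeasureTheory Filter Real

open Set

-- real integrability with scaled rate
lemma intOn_aux {a r : ℝ} (ha : -1 < a) (hr : 0 < r) :
    IntegrableOn (fun t : ℝ => t ^ a * Real.exp (-(r * t))) (Ioi 0) := by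
  have h0 : IntegrableOn (fun x : ℝ => Real.exp (-x) * x ^ ((a + 1) - 1)) (Ioi 0) :=
    Real.GammaIntegral_convergent (by linarith)
  have h1 : IntegrableOn (fun t : ℝ => Real.exp (-(r * t)) * (r * t) ^ ((a+1) - 1)) (Ioi 0) := by
    have := (integrableOn_Ioi_comp_mul_left_iff
      (fun x : ℝ => Real.exp (-x) * x ^ ((a + 1) - 1)) 0 hr).mpr
    simpa using this (by simpa using h0)
  have h2 := h1.const_mul (r ^ a)⁻¹
  refine IntegrableOn.congr_fun h2 (fun t ht => ?_) measurableSet_Ioi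
  rw [mem_Ioi] at ht
  rw [add_sub_cancel_right, Real.mul_rpow hr.le ht.le]
  field_simp [(Real.rpow_pos_of_pos hr a).ne']

-- continuity/measurability of the integrand on Ioi 0
lemma contOn_aux (w z : ℂ) :
    ContinuousOn (fun t : ℝ => (t : ℂ) ^ w * Complex.exp (-(z * t))) (Ioi 0) := by
  apply ContinuousOn.mul
  · intro t ht
    exact ((continuousAt_cpow_const (Or.inl (by simpa using ht))).comp
      Complex.continuous_ofReal.continuousAt).continuousWithinAt
  · exact (Complex.continuous_exp.comp ((continuous_const.mul Complex.continuous_ofReal).neg)).continuousOn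

lemma norm_aux {t : ℝ} (ht : 0 < t) (w z : ℂ) :
    ‖(t : ℂ) ^ w * Complex.exp (-(z * t))‖ = t ^ w.re * Real.exp (-(z.re * t)) := by
  rw [norm_mul, Complex.norm_cpow_eq_rpow_re_of_pos ht,
    Complex.norm_exp]
  congr 2
  simp

lemma cintOn_aux {w : ℂ} (hw : -1 < w.re) {z : ℂ} (hz : 0 < z.re) :
    IntegrableOn (fun t : ℝ => (t : ℂ) ^ w * Complex.exp (-(z * t))) (Ioi 0) := by
  refine Integrable.mono' (intOn_aux hw hz) ((contOn_aux w z).aestronglyMeasurable measurableSet_Ioi) ?_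
  filter_upwards [ae_restrict_mem measurableSet_Ioi] with t ht
  rw [norm_aux ht]


lemma hasDerivAt_Jint {s : ℂ} (h1 : 0 < s.re) {z : ℂ} (hz : 0 < z.re) :
    HasDerivAt (fun z : ℂ => ∫ t in Ioi (0:ℝ), (t : ℂ) ^ (s - 1) * Complex.exp (-(z * t)))
      (∫ t in Ioi (0:ℝ), -((t : ℂ) ^ s * Complex.exp (-(z * t)))) z := by
  have hre : (-1 : ℝ) < (s - 1).re := by simp; linarith
  have key := hasDerivAt_integral_of_dominated_loc_of_deriv_le (μ := volume.restrict (Ioi (0:ℝ)))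
    (F := fun (x : ℂ) (t : ℝ) => (t : ℂ) ^ (s - 1) * Complex.exp (-(x * t)))
    (F' := fun (x : ℂ) (t : ℝ) => -((t : ℂ) ^ s * Complex.exp (-(x * t))))
    (x₀ := z) (bound := fun t : ℝ => t ^ s.re * Real.exp (-(z.re / 2 * t)))
    (s := Metric.ball z (z.re / 2)) (Metric.ball_mem_nhds _ (by linarith)) ?_ ?_ ?_ ?_ ?_ ?_
  · exact key.2
  · filter_upwards with x
    exact (contOn_aux (s-1) x).aestronglyMeasurable measurableSet_Ioi
  · exact cintOn_aux hre hz
  · exact (((contOn_aux s z).neg).aestronglyMeasurable measurableSet_Ioi)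
  · filter_upwards [ae_restrict_mem measurableSet_Ioi] with t ht x hx
    rw [norm_neg, norm_aux ht]
    rw [mem_Ioi] at ht
    have hxr : z.re / 2 ≤ x.re := by
      rw [Metric.mem_ball, Complex.dist_eq] at hx
      have h3 : |(x - z).re| ≤ ‖x - z‖ := Complex.abs_re_le_norm _
      rw [Complex.sub_re] at h3
      have h4 := abs_lt.mp (lt_of_le_of_lt h3 hx)
      linarith [h4.1]
    exact mul_le_mul_of_nonneg_left (Real.exp_le_exp.mpr (by nlinarith)) (Real.rpow_nonneg ht.le _)
  · exact intOn_aux (by linarith) (by linarith)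
  · filter_upwards [ae_restrict_mem measurableSet_Ioi] with t ht x hx
    have ht0 : (t : ℂ) ≠ 0 := by exact_mod_cast ht.ne'
    have hde : HasDerivAt (fun x : ℂ => Complex.exp (-(x * t))) (-(t : ℂ) * Complex.exp (-(x * t))) x := by
      have h' : HasDerivAt (fun x : ℂ => -(x * t)) (-(t : ℂ)) x := by
        exact ((hasDerivAt_id x).mul_const (t : ℂ)).neg.congr_deriv (by simp)
      exact ((Complex.hasDerivAt_exp (-(x * t))).comp x h').congr_deriv (by ring)
    have := (hde.const_mul ((t : ℂ) ^ (s - 1)))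
    refine this.congr_deriv ?_
    have hts : (t : ℂ) ^ s = (t : ℂ) * (t : ℂ) ^ (s - 1) := by
      conv_lhs => rw [show s = 1 + (s - 1) by ring]
      rw [Complex.cpow_add _ _ ht0, Complex.cpow_one]
    rw [hts]; ring

lemma Jint_eq {s : ℂ} (h1 : 0 < s.re) {z : ℂ} (hz : 0 < z.re) :
    ∫ t in Ioi (0:ℝ), (t : ℂ) ^ (s - 1) * Complex.exp (-(z * t))
      = Complex.Gamma s * z ^ (-s) := by
  have hre : (-1 : ℝ) < (s - 1).re := by simp; linarith
  set U : Set ℂ := {z : ℂ | 0 < z.re} with hU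
  have hUopen : IsOpen U := isOpen_lt continuous_const Complex.continuous_re
  have hUconn : IsPreconnected U := (convex_halfSpace_re_gt 0).isPreconnected
  have hg : AnalyticOnNhd ℂ (fun z : ℂ => ∫ t in Ioi (0:ℝ), (t : ℂ) ^ (s - 1) * Complex.exp (-(z * t))) U := by
    refine DifferentiableOn.analyticOnNhd (fun z hz => ?_) hUopen
    exact (hasDerivAt_Jint h1 hz).differentiableAt.differentiableWithinAt
  have hh : AnalyticOnNhd ℂ (fun z : ℂ => Complex.Gamma s * z ^ (-s)) U := by
    refine DifferentiableOn.analyticOnNhd (fun z hz => ?_) hUopen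
    refine ((differentiableAt_id.cpow (differentiableAt_const _) ?_).const_mul _).differentiableWithinAt
    exact Or.inl hz
  have h1U : (1 : ℂ) ∈ U := by simp [hU]
  have hfreq : ∃ᶠ z in nhdsWithin (1 : ℂ) {(1 : ℂ)}ᶜ,
      (fun z : ℂ => ∫ t in Ioi (0:ℝ), (t : ℂ) ^ (s - 1) * Complex.exp (-(z * t))) z
        = (fun z : ℂ => Complex.Gamma s * z ^ (-s)) z := by
    have hseq : Tendsto (fun n : ℕ => ((1 + (n + 1: ℝ)⁻¹ : ℝ) : ℂ)) atTop
        (nhdsWithin (1 : ℂ) {(1 : ℂ)}ᶜ) := by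
      rw [tendsto_nhdsWithin_iff]
      constructor
      · have h5 : Tendsto (fun n : ℕ => (1 + (n + 1 : ℝ)⁻¹ : ℝ)) atTop (nhds 1) := by
          have h6 : Tendsto (fun n : ℕ => ((n : ℝ) + 1)⁻¹) atTop (nhds 0) := by
            simpa [one_div] using tendsto_one_div_add_atTop_nhds_zero_nat (𝕜 := ℝ)
          simpa using (tendsto_const_nhds (x := (1:ℝ)) (f := atTop)).add h6
        have h7 := (Complex.continuous_ofReal.tendsto 1).comp h5
        simpa [Function.comp_def] using h7
      · filter_upwards with n
        simp only [Set.mem_compl_iff, Set.mem_singleton_iff]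
        intro h
        have : (1 + (n + 1 : ℝ)⁻¹ : ℝ) = 1 := by exact_mod_cast h
        have : ((n : ℝ) + 1)⁻¹ > 0 := by positivity
        linarith [this]
    refine hseq.frequently (Frequently.of_forall (fun n => ?_))
    set r : ℝ := 1 + (n + 1 : ℝ)⁻¹ with hr
    have hrpos : 0 < r := by positivity
    have := Complex.integral_cpow_mul_exp_neg_mul_Ioi h1 hrpos
    simp only
    rw [this]
    rw [one_div, Complex.inv_cpow _ _ (by
      rw [Complex.arg_ofReal_of_nonneg hrpos.le]
      exact ne_of_lt pi_pos), ← Complex.cpow_neg]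
    ring
  have := hg.eqOn_of_preconnected_of_frequently_eq hh hUconn h1U hfreq
  exact this hz

lemma IIocInt {w z : ℂ} (hw : -1 < w.re) (hz : 0 ≤ z.re) {T : ℝ} (hT : 0 ≤ T) :
    IntervalIntegrable (fun t : ℝ => (t : ℂ) ^ w * Complex.exp (-(z * t))) volume 0 T := by
  rw [intervalIntegrable_iff_integrableOn_Ioc_of_le hT]
  have hg : IntegrableOn (fun t : ℝ => t ^ w.re) (Ioc (0:ℝ) T) := by
    have := (intervalIntegral.intervalIntegrable_rpow' (a := 0) (b := T) hw)
    rwa [intervalIntegrable_iff_integrableOn_Ioc_of_le hT] at this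
  refine Integrable.mono' hg (((contOn_aux w z).mono Ioc_subset_Ioi_self).aestronglyMeasurable
    measurableSet_Ioc) ?_
  filter_upwards [ae_restrict_mem measurableSet_Ioc] with t ht
  rw [norm_aux ht.1]
  calc t ^ w.re * Real.exp (-(z.re * t)) ≤ t ^ w.re * 1 := by
        gcongr
        · exact Real.rpow_nonneg ht.1.le _
        · exact Real.exp_le_one_iff.mpr (by nlinarith [ht.1.le])
    _ = t ^ w.re := mul_one _

lemma exp_z_deriv (z : ℂ) (x : ℝ) :
    HasDerivAt (fun t : ℝ => Complex.exp (-(z * t))) (-z * Complex.exp (-(z * x))) x := by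
  have h : HasDerivAt (fun w : ℂ => Complex.exp (-(z * w))) (-z * Complex.exp (-(z * (x:ℂ)))) (x : ℂ) := by
    have h' : HasDerivAt (fun w : ℂ => -(z * w)) (-z) (x : ℂ) := by
      exact ((hasDerivAt_id (x:ℂ)).const_mul z).neg.congr_deriv (by simp)
    exact ((Complex.hasDerivAt_exp (-(z * (x:ℂ)))).comp (x:ℂ) h').congr_deriv (by ring)
  exact h.comp_ofReal

lemma tailBound {s : ℂ} (h1 : 0 < s.re) (h2 : s.re < 1) {z : ℂ} (hz : 0 ≤ z.re)
    {b : ℝ} (hb : 0 < b) (hzb : b ≤ ‖z‖) {T₁ T₂ : ℝ} (hT1 : 1 ≤ T₁) (hT12 : T₁ ≤ T₂) :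
    ‖∫ t in T₁..T₂, (t : ℂ) ^ (s - 1) * Complex.exp (-(z * t))‖
      ≤ (2 + ‖s - 1‖ / (1 - s.re)) / b * T₁ ^ (s.re - 1) := by
  have hzpos : 0 < ‖z‖ := lt_of_lt_of_le hb hzb
  have hIcc : Set.uIcc T₁ T₂ ⊆ Ioi (0:ℝ) := by
    rw [Set.uIcc_of_le hT12]
    intro x hx
    exact lt_of_lt_of_le (by linarith) hx.1
  have hT1pos : (0:ℝ) < T₁ := by linarith
  have hT2pos : (0:ℝ) < T₂ := by linarith
  -- derivatives
  have hu : ∀ x ∈ Set.uIcc T₁ T₂, HasDerivAt (fun t : ℝ => (t : ℂ) ^ (s - 1))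
      ((s - 1) * (x : ℂ) ^ (s - 2)) x := by
    intro x hx
    have hx0 : x ≠ 0 := (hIcc hx).ne'
    have hs2 : s - 2 ≠ -1 := by
      intro h
      have h' : s = 1 := by linear_combination h
      rw [h'] at h2; simp at h2
    have hs1 : s - 1 ≠ 0 := by
      intro h
      have h' := congrArg Complex.re h
      simp [Complex.sub_re] at h'
      linarith
    have hder := (hasDerivAt_ofReal_cpow_const' hx0 hs2).const_mul (s - 1)
    rw [show s - 2 + 1 = s - 1 by ring] at hder
    have hfun : (fun y : ℝ => (s - 1) * ((y:ℂ) ^ (s - 1) / (s - 1)))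
        = fun y : ℝ => (y:ℂ) ^ (s - 1) := by
      funext y; field_simp
    rwa [hfun] at hder
  have hv : ∀ x ∈ Set.uIcc T₁ T₂, HasDerivAt (fun t : ℝ => -Complex.exp (-(z * t)) / z)
      (Complex.exp (-(z * x))) x := by
    intro x _
    have hz0 : z ≠ 0 := fun h => by rw [h] at hzpos; simp at hzpos
    have hd := ((exp_z_deriv z x).neg).div_const z
    have : -(-z * Complex.exp (-(z * x))) / z = Complex.exp (-(z * x)) := by
      field_simp
    rwa [this] at hd
  have hu' : IntervalIntegrable (fun x : ℝ => (s - 1) * (x : ℂ) ^ (s - 2)) volume T₁ T₂ := by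
    apply ContinuousOn.intervalIntegrable
    refine ContinuousOn.mul continuousOn_const ?_
    intro x hx
    exact ((continuousAt_cpow_const (Or.inl (by simpa using hIcc hx))).comp
      Complex.continuous_ofReal.continuousAt).continuousWithinAt
  have hv' : IntervalIntegrable (fun x : ℝ => Complex.exp (-(z * x))) volume T₁ T₂ :=
    (Complex.continuous_exp.comp
      ((continuous_const.mul Complex.continuous_ofReal).neg)).intervalIntegrable _ _
  have hibp := intervalIntegral.integral_mul_deriv_eq_deriv_mul hu hv hu' hv'
  rw [hibp]
  -- bound the three pieces
  have hbd : ∀ T : ℝ, T₁ ≤ T → ‖(T : ℂ) ^ (s - 1) * (-Complex.exp (-(z * T)) / z)‖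
      ≤ T₁ ^ (s.re - 1) / b := by
    intro T hT
    have hTpos : 0 < T := by linarith
    rw [norm_mul, norm_div, norm_neg, Complex.norm_cpow_eq_rpow_re_of_pos hTpos, Complex.norm_exp]
    have h5 : T ^ (s - 1).re ≤ T₁ ^ (s.re - 1) := by
      rw [show (s - 1).re = s.re - 1 by simp]
      exact Real.rpow_le_rpow_of_nonpos hT1pos hT (by linarith)
    have h6 : Real.exp ((-(z * T)).re) ≤ 1 := by
      rw [Real.exp_le_one_iff]
      have he : (-(z * ↑T)).re = -(z.re * T) := by simp
      rw [he]; nlinarith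
    calc T ^ (s - 1).re * (Real.exp ((-(z * ↑T)).re) / ‖z‖)
        ≤ T₁ ^ (s.re - 1) * (1 / b) := by
          apply mul_le_mul h5 _ (by positivity) (Real.rpow_nonneg hT1pos.le _)
          exact div_le_div₀ (by norm_num) h6 hb hzb
      _ = T₁ ^ (s.re - 1) / b := by ring
  have hmid : ‖∫ x in T₁..T₂, (s - 1) * (x:ℂ) ^ (s - 2) * (-Complex.exp (-(z * x)) / z)‖
      ≤ ‖s - 1‖ / (1 - s.re) / b * T₁ ^ (s.re - 1) := by
    have hb1 : ∀ᵐ (t : ℝ) ∂(volume.restrict (Set.uIoc T₁ T₂)),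
        ‖(s - 1) * (t:ℂ) ^ (s - 2) * (-Complex.exp (-(z * t)) / z)‖
          ≤ ‖s - 1‖ / b * t ^ (s.re - 2) := by
      filter_upwards [ae_restrict_mem measurableSet_uIoc] with t ht
      have htpos : 0 < t := by
        have : t ∈ Set.uIcc T₁ T₂ := Set.uIoc_subset_uIcc ht
        exact hIcc this
      rw [norm_mul, norm_mul, norm_div, norm_neg,
        Complex.norm_cpow_eq_rpow_re_of_pos htpos, Complex.norm_exp]
      have h6 : Real.exp ((-(z * t)).re) ≤ 1 := by
        rw [Real.exp_le_one_iff]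
        have he : (-(z * (t:ℝ))).re = -(z.re * t) := by simp
        rw [he]; nlinarith
      rw [show (s - 2).re = s.re - 2 by simp]
      calc ‖s - 1‖ * t ^ (s.re - 2) * (Real.exp ((-(z * t)).re) / ‖z‖)
          ≤ ‖s - 1‖ * t ^ (s.re - 2) * (1 / b) := by
            apply mul_le_mul_of_nonneg_left (div_le_div₀ (by norm_num) h6 hb hzb)
            positivity
        _ = ‖s - 1‖ / b * t ^ (s.re - 2) := by ring
    have hbint : IntervalIntegrable (fun t : ℝ => ‖s - 1‖ / b * t ^ (s.re - 2))
        volume T₁ T₂ := by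
      apply ContinuousOn.intervalIntegrable
      refine ContinuousOn.mul continuousOn_const ?_
      intro x hx
      exact (Real.continuousAt_rpow_const x _ (Or.inl (hIcc hx).ne')).continuousWithinAt
    refine le_trans (intervalIntegral.norm_integral_le_abs_of_norm_le hb1 hbint) ?_
    have h0mem : (0:ℝ) ∉ Set.uIcc T₁ T₂ := fun h => by simpa using hIcc h
    rw [intervalIntegral.integral_const_mul,
      integral_rpow (Or.inr ⟨by intro h; linarith, h0mem⟩)]
    rw [show s.re - 2 + 1 = s.re - 1 by ring, abs_mul,
      _root_.abs_of_nonneg (by positivity : (0:ℝ) ≤ ‖s - 1‖ / b)]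
    have h8 : T₂ ^ (s.re - 1) ≤ T₁ ^ (s.re - 1) :=
      Real.rpow_le_rpow_of_nonpos hT1pos hT12 (by linarith)
    have h9 : 0 ≤ T₂ ^ (s.re - 1) := Real.rpow_nonneg hT2pos.le _
    have h11 : |(T₂ ^ (s.re - 1) - T₁ ^ (s.re - 1)) / (s.re - 1)|
        ≤ T₁ ^ (s.re - 1) / (1 - s.re) := by
      rw [abs_div, abs_of_neg (by linarith : s.re - 1 < 0),
        abs_of_nonpos (by linarith : T₂ ^ (s.re - 1) - T₁ ^ (s.re - 1) ≤ 0),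
        show -(s.re - 1) = 1 - s.re by ring, neg_sub]
      gcongr
      · linarith
    calc ‖s - 1‖ / b * |(T₂ ^ (s.re - 1) - T₁ ^ (s.re - 1)) / (s.re - 1)|
        ≤ ‖s - 1‖ / b * (T₁ ^ (s.re - 1) / (1 - s.re)) := by
          apply mul_le_mul_of_nonneg_left h11 (by positivity)
      _ = ‖s - 1‖ / (1 - s.re) / b * T₁ ^ (s.re - 1) := by ring
  calc ‖(T₂:ℂ) ^ (s - 1) * (-Complex.exp (-(z * T₂)) / z)
        - (T₁:ℂ) ^ (s - 1) * (-Complex.exp (-(z * T₁)) / z)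
        - ∫ x in T₁..T₂, (s - 1) * (x:ℂ) ^ (s - 2) * (-Complex.exp (-(z * x)) / z)‖
      ≤ ‖(T₂:ℂ) ^ (s - 1) * (-Complex.exp (-(z * T₂)) / z)‖
        + ‖(T₁:ℂ) ^ (s - 1) * (-Complex.exp (-(z * T₁)) / z)‖
        + ‖∫ x in T₁..T₂, (s - 1) * (x:ℂ) ^ (s - 2) * (-Complex.exp (-(z * x)) / z)‖ := by
        refine le_trans (norm_sub_le _ _) ?_
        gcongr
        exact norm_sub_le _ _
    _ ≤ T₁ ^ (s.re - 1) / b + T₁ ^ (s.re - 1) / b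
        + ‖s - 1‖ / (1 - s.re) / b * T₁ ^ (s.re - 1) := by
        gcongr
        · exact hbd T₂ hT12
        · exact hbd T₁ le_rfl
    _ = (2 + ‖s - 1‖ / (1 - s.re)) / b * T₁ ^ (s.re - 1) := by ring

lemma tail_Ioi {s : ℂ} (h1 : 0 < s.re) (h2 : s.re < 1) {z : ℂ} (hz : 0 < z.re)
    {b : ℝ} (hb : 0 < b) (hzb : b ≤ ‖z‖) {T : ℝ} (hT : 1 ≤ T) :
    ‖(∫ t in Ioi (0:ℝ), (t : ℂ) ^ (s - 1) * Complex.exp (-(z * t)))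
      - ∫ t in (0:ℝ)..T, (t : ℂ) ^ (s - 1) * Complex.exp (-(z * t))‖
      ≤ (2 + ‖s - 1‖ / (1 - s.re)) / b * T ^ (s.re - 1) := by
  have hre : (-1 : ℝ) < (s - 1).re := by simp; linarith
  have hint := cintOn_aux hre hz
  have htendsto : Tendsto (fun T₂ : ℝ => ∫ t in (0:ℝ)..T₂, (t : ℂ) ^ (s - 1) * Complex.exp (-(z * t)))
      atTop (nhds (∫ t in Ioi (0:ℝ), (t : ℂ) ^ (s - 1) * Complex.exp (-(z * t)))) :=
    intervalIntegral_tendsto_integral_Ioi 0 hint tendsto_id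
  have hdiff : Tendsto (fun T₂ : ℝ => (∫ t in (0:ℝ)..T₂, (t : ℂ) ^ (s - 1) * Complex.exp (-(z * t)))
      - ∫ t in (0:ℝ)..T, (t : ℂ) ^ (s - 1) * Complex.exp (-(z * t))) atTop
      (nhds ((∫ t in Ioi (0:ℝ), (t : ℂ) ^ (s - 1) * Complex.exp (-(z * t)))
        - ∫ t in (0:ℝ)..T, (t : ℂ) ^ (s - 1) * Complex.exp (-(z * t)))) :=
    htendsto.sub tendsto_const_nhds
  refine le_of_tendsto hdiff.norm ?_
  filter_upwards [eventually_ge_atTop T] with T₂ hT₂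
  have hII : ∀ T' : ℝ, 0 ≤ T' → IntervalIntegrable
      (fun t : ℝ => (t : ℂ) ^ (s - 1) * Complex.exp (-(z * t))) volume 0 T' :=
    fun T' hT' => IIocInt hre hz.le hT'
  have hsplit : (∫ t in (0:ℝ)..T₂, (t : ℂ) ^ (s - 1) * Complex.exp (-(z * t)))
      - (∫ t in (0:ℝ)..T, (t : ℂ) ^ (s - 1) * Complex.exp (-(z * t)))
      = ∫ t in T..T₂, (t : ℂ) ^ (s - 1) * Complex.exp (-(z * t)) :=
    intervalIntegral.integral_interval_sub_left (hII T₂ (by linarith)) (hII T (by linarith))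
  rw [hsplit]
  exact tailBound h1 h2 hz.le hb hzb hT hT₂

lemma cmp_eps {s : ℂ} (h1 : 0 < s.re) (h2 : s.re < 1) (c ε : ℝ) (hε : 0 ≤ ε)
    {T : ℝ} (hT : 0 ≤ T) :
    ‖(∫ t in (0:ℝ)..T, (t : ℂ) ^ (s - 1) * Complex.exp (-(((ε:ℂ) + Complex.I * c) * t)))
      - ∫ t in (0:ℝ)..T, (t : ℂ) ^ (s - 1) * Complex.exp (-((Complex.I * c) * t))‖
      ≤ ε * (T ^ (s.re + 1) / (s.re + 1)) := by
  have hre : (-1 : ℝ) < (s - 1).re := by simp; linarith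
  have hre1 : (0:ℝ) ≤ ((ε:ℂ) + Complex.I * c).re := by simp [hε]
  have hre2 : (0:ℝ) ≤ ((Complex.I : ℂ) * c).re := by simp
  have hI1 := IIocInt hre hre1 hT
  have hI2 := IIocInt hre hre2 hT
  rw [← intervalIntegral.integral_sub hI1 hI2]
  have hb1 : ∀ᵐ (t : ℝ) ∂(volume.restrict (Set.uIoc 0 T)),
      ‖(t : ℂ) ^ (s - 1) * Complex.exp (-(((ε:ℂ) + Complex.I * c) * t))
        - (t : ℂ) ^ (s - 1) * Complex.exp (-((Complex.I * c) * t))‖ ≤ ε * t ^ s.re := by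
    filter_upwards [ae_restrict_mem measurableSet_uIoc] with t ht
    rw [Set.uIoc_of_le hT] at ht
    have htpos : 0 < t := ht.1
    have hfactor : Complex.exp (-(((ε:ℂ) + Complex.I * c) * t)) - Complex.exp (-((Complex.I * c) * t))
        = Complex.exp (-((Complex.I * c) * t)) * (Complex.exp (-(ε * t : ℝ)) - 1) := by
      rw [mul_sub, ← Complex.exp_add, mul_one]
      congr 2
      push_cast
      ring
    rw [← mul_sub, norm_mul, hfactor, norm_mul, Complex.norm_cpow_eq_rpow_re_of_pos htpos,
      Complex.norm_exp]
    have he1 : (-((Complex.I * c) * t)).re = 0 := by simp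
    rw [he1, Real.exp_zero, one_mul]
    have he2 : ‖Complex.exp (-(ε * t : ℝ)) - 1‖ ≤ ε * t := by
      rw [← Complex.ofReal_one, ← Complex.ofReal_neg, ← Complex.ofReal_exp, ← Complex.ofReal_sub,
        Complex.norm_real, Real.norm_eq_abs]
      rw [abs_of_nonpos (by simp [Real.exp_le_one_iff]; positivity)]
      have := Real.add_one_le_exp (-(ε * t))
      simp only [neg_sub]
      linarith [Real.add_one_le_exp (-(ε * t))]
    calc t ^ (s - 1).re * ‖Complex.exp (-(ε * t : ℝ)) - 1‖
        ≤ t ^ (s - 1).re * (ε * t) := by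
          apply mul_le_mul_of_nonneg_left he2 (Real.rpow_nonneg htpos.le _)
      _ = ε * (t ^ (s.re - 1) * t) := by rw [show (s-1).re = s.re - 1 by simp]; ring
      _ = ε * t ^ s.re := by
          rw [← Real.rpow_add_one htpos.ne' (s.re - 1), sub_add_cancel]
  have hbint : IntervalIntegrable (fun t : ℝ => ε * t ^ s.re) volume 0 T :=
    (intervalIntegral.intervalIntegrable_rpow' (by linarith)).const_mul ε
  refine le_trans (intervalIntegral.norm_integral_le_abs_of_norm_le hb1 hbint) ?_
  rw [intervalIntegral.integral_const_mul, integral_rpow (Or.inl (by linarith))]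
  rw [abs_mul, Real.zero_rpow (by linarith : s.re + 1 ≠ 0), sub_zero, _root_.abs_of_nonneg hε,
    _root_.abs_of_nonneg (by positivity : (0:ℝ) ≤ T ^ (s.re + 1) / (s.re + 1))]

lemma Jlim {s : ℂ} (h1 : 0 < s.re) (h2 : s.re < 1) {c : ℝ} (hc : c ≠ 0) :
    Tendsto (fun T : ℝ => ∫ t in (0:ℝ)..T, (t : ℂ) ^ (s - 1) * Complex.exp (-((Complex.I * c) * t)))
      atTop (nhds (Complex.Gamma s * (Complex.I * c) ^ (-s))) := by
  have hcabs : 0 < |c| := abs_pos.mpr hc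
  set K : ℝ := (2 + ‖s - 1‖ / (1 - s.re)) / |c| with hK
  set V : ℂ := Complex.Gamma s * (Complex.I * c) ^ (-s) with hV
  have key : ∀ T : ℝ, 1 ≤ T →
      ‖(∫ t in (0:ℝ)..T, (t : ℂ) ^ (s - 1) * Complex.exp (-((Complex.I * c) * t))) - V‖
        ≤ K * T ^ (s.re - 1) := by
    intro T hT
    have hcont : Tendsto (fun ε : ℝ => Complex.Gamma s * ((ε:ℂ) + Complex.I * c) ^ (-s))
        (nhdsWithin 0 (Ioi 0)) (nhds V) := by
      have hslit : ((0:ℂ) + Complex.I * c) ∈ Complex.slitPlane := by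
        refine Or.inr ?_
        simp [hc]
      have hcc : ContinuousAt (fun w : ℂ => Complex.Gamma s * w ^ (-s)) (((0:ℝ):ℂ) + Complex.I * c) := by
        exact (continuousAt_cpow_const (by simpa using hslit)).const_mul _
      have hmap : Tendsto (fun ε : ℝ => ((ε:ℂ) + Complex.I * c)) (nhds 0)
          (nhds (((0:ℝ):ℂ) + Complex.I * c)) :=
        ((Complex.continuous_ofReal.continuousAt).add continuousAt_const).tendsto
      have h9 := hcc.tendsto.comp hmap
      rw [hV]
      refine Tendsto.mono_left ?_ nhdsWithin_le_nhds
      simpa [Function.comp_def] using h9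
    have hineq : ∀ ε ∈ Ioi (0:ℝ),
        ‖(∫ t in (0:ℝ)..T, (t : ℂ) ^ (s - 1) * Complex.exp (-((Complex.I * c) * t))) - V‖
          ≤ ε * (T ^ (s.re + 1) / (s.re + 1)) + K * T ^ (s.re - 1)
            + ‖Complex.Gamma s * ((ε:ℂ) + Complex.I * c) ^ (-s) - V‖ := by
      intro ε hε
      rw [mem_Ioi] at hε
      set z : ℂ := (ε:ℂ) + Complex.I * c with hz
      have hzre : 0 < z.re := by simp [hz, hε]
      have hzabs : |c| ≤ ‖z‖ := by
        have : z.im = c := by simp [hz]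
        calc |c| = |z.im| := by rw [this]
          _ ≤ ‖z‖ := Complex.abs_im_le_norm z
      have hJv := Jint_eq h1 hzre
      have htail := tail_Ioi h1 h2 hzre hcabs hzabs hT
      rw [hJv] at htail
      have hcmp := cmp_eps h1 h2 c ε hε.le (by linarith : (0:ℝ) ≤ T)
      calc ‖(∫ t in (0:ℝ)..T, (t : ℂ) ^ (s - 1) * Complex.exp (-((Complex.I * c) * t))) - V‖
          ≤ ‖(∫ t in (0:ℝ)..T, (t : ℂ) ^ (s - 1) * Complex.exp (-((Complex.I * c) * t)))
              - (∫ t in (0:ℝ)..T, (t : ℂ) ^ (s - 1) * Complex.exp (-(z * t)))‖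
            + ‖(∫ t in (0:ℝ)..T, (t : ℂ) ^ (s - 1) * Complex.exp (-(z * t)))
              - Complex.Gamma s * z ^ (-s)‖
            + ‖Complex.Gamma s * z ^ (-s) - V‖ := by
              refine le_trans (norm_sub_le_norm_sub_add_norm_sub _
                (∫ t in (0:ℝ)..T, (t : ℂ) ^ (s - 1) * Complex.exp (-(z * t))) _) ?_
              rw [add_assoc]
              gcongr
              exact norm_sub_le_norm_sub_add_norm_sub _ _ _
        _ ≤ ε * (T ^ (s.re + 1) / (s.re + 1)) + K * T ^ (s.re - 1)
            + ‖Complex.Gamma s * z ^ (-s) - V‖ := by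
              gcongr
              · rw [← norm_neg, neg_sub]
                exact hcmp
              · rw [← norm_neg, neg_sub]
                exact htail
    have hRHS : Tendsto (fun ε : ℝ => ε * (T ^ (s.re + 1) / (s.re + 1)) + K * T ^ (s.re - 1)
        + ‖Complex.Gamma s * ((ε:ℂ) + Complex.I * c) ^ (-s) - V‖)
        (nhdsWithin 0 (Ioi 0)) (nhds (K * T ^ (s.re - 1))) := by
      have ha : Tendsto (fun ε : ℝ => ε * (T ^ (s.re + 1) / (s.re + 1))) (nhdsWithin 0 (Ioi 0))
          (nhds 0) := by
        have h8 : Continuous (fun ε : ℝ => ε * (T ^ (s.re + 1) / (s.re + 1))) :=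
          continuous_id.mul continuous_const
        have := h8.tendsto (0:ℝ)
        simp only [zero_mul] at this
        exact this.mono_left nhdsWithin_le_nhds
      have hb : Tendsto (fun ε : ℝ => ‖Complex.Gamma s * ((ε:ℂ) + Complex.I * c) ^ (-s) - V‖)
          (nhdsWithin 0 (Ioi 0)) (nhds 0) := by
        have h8 : Tendsto (fun ε : ℝ => Complex.Gamma s * ((ε:ℂ) + Complex.I * c) ^ (-s) - V)
            (nhdsWithin 0 (Ioi 0)) (nhds (V - V)) := hcont.sub tendsto_const_nhds
        have h9 := h8.norm
        simpa using h9
      have hcst : Tendsto (fun _ : ℝ => K * T ^ (s.re - 1)) (nhdsWithin 0 (Ioi 0))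
          (nhds (K * T ^ (s.re - 1))) := tendsto_const_nhds
      have h10 := (ha.add hcst).add hb
      simpa using h10
    exact ge_of_tendsto hRHS (eventually_nhdsWithin_of_forall (hineq))
  -- squeeze
  rw [tendsto_iff_norm_sub_tendsto_zero]
  have hg : Tendsto (fun T : ℝ => K * T ^ (s.re - 1)) atTop (nhds 0) := by
    have := (tendsto_rpow_neg_atTop (show (0:ℝ) < 1 - s.re by linarith)).const_mul K
    simpa [show -(1 - s.re) = s.re - 1 by ring] using this
  refine squeeze_zero' ?_ ?_ hg
  · filter_upwards with T; exact norm_nonneg _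
  · filter_upwards [eventually_ge_atTop (1:ℝ)] with T hT
    exact key T hT

lemma sum_cpow {b : ℝ} (hb : 0 < b) (s : ℂ) :
    (Complex.I * ((-b : ℝ) : ℂ)) ^ (-s) + (Complex.I * (b : ℂ)) ^ (-s)
      = 2 * Complex.cos ((π : ℂ) * s / 2) * (b : ℂ) ^ (-s) := by
  have hb0 : (b : ℂ) ≠ 0 := Complex.ofReal_ne_zero.mpr hb.ne'
  have hz1 : Complex.I * ((-b : ℝ) : ℂ) ≠ 0 := by
    simp [Complex.I_ne_zero, hb.ne']
  have hz2 : Complex.I * (b : ℂ) ≠ 0 := by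
    simp [Complex.I_ne_zero, hb.ne']
  have hlog2 : Complex.log (Complex.I * (b : ℂ)) = ((Real.log b : ℝ) : ℂ) + ((π/2 : ℝ) : ℂ) * Complex.I := by
    rw [mul_comm]
    have harg : Complex.arg ((b : ℂ) * Complex.I) = π / 2 := by
      rw [Complex.arg_real_mul _ hb, Complex.arg_I]
    have habs : ‖(b : ℂ) * Complex.I‖ = b := by
      simp [abs_of_pos hb]
    apply Complex.ext
    · rw [Complex.log_re, habs]; simp
    · rw [Complex.log_im, harg]; simp
  have hlog1 : Complex.log (Complex.I * ((-b : ℝ) : ℂ)) = ((Real.log b : ℝ) : ℂ) - ((π/2 : ℝ) : ℂ) * Complex.I := by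
    have hrw : Complex.I * ((-b : ℝ) : ℂ) = (b : ℂ) * (-Complex.I) := by push_cast; ring
    rw [hrw]
    have harg : Complex.arg ((b : ℂ) * (-Complex.I)) = -(π / 2) := by
      rw [Complex.arg_real_mul _ hb, Complex.arg_neg_I]
    have habs : ‖(b : ℂ) * (-Complex.I)‖ = b := by
      simp [abs_of_pos hb]
    apply Complex.ext
    · rw [Complex.log_re, habs]; simp
    · rw [Complex.log_im, harg]; simp
  rw [Complex.cpow_def_of_ne_zero hz1, Complex.cpow_def_of_ne_zero hz2,
    Complex.cpow_def_of_ne_zero hb0, hlog1, hlog2, ← Complex.ofReal_log hb.le]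
  rw [show (((Real.log b : ℝ) : ℂ) - ((π/2 : ℝ) : ℂ) * Complex.I) * (-s)
      = ((π : ℂ) * s / 2) * Complex.I + ((Real.log b : ℝ) : ℂ) * (-s) by push_cast; ring]
  rw [show (((Real.log b : ℝ) : ℂ) + ((π/2 : ℝ) : ℂ) * Complex.I) * (-s)
      = -((π : ℂ) * s / 2) * Complex.I + ((Real.log b : ℝ) : ℂ) * (-s) by push_cast; ring]
  rw [Complex.exp_add, Complex.exp_add]
  linear_combination -Complex.exp (((Real.log b : ℝ) : ℂ) * (-s)) * Complex.two_cos ((π : ℂ) * s / 2)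

theorem improper_cos_mellin (b : ℝ) (s : ℂ) (hb : 0 < b) (h1 : 0 < s.re) (h2 : s.re < 1) :
    Tendsto (fun T : ℝ => ∫ t in (0 : ℝ)..T, Complex.cos ((b : ℂ) * t) * (t : ℂ) ^ (s - 1))
      atTop
      (nhds (Complex.cos ((π : ℂ) * s / 2) * (b : ℂ) ^ (-s) * Complex.Gamma s)) := by
  have hre : (-1 : ℝ) < (s - 1).re := by simp; linarith
  have hminus := Jlim h1 h2 (c := -b) (neg_ne_zero.mpr hb.ne')
  have hplus := Jlim h1 h2 (c := b) hb.ne'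
  have hcomb := (hminus.add hplus).div_const (2 : ℂ)
  have heq : (fun T : ℝ => ((∫ t in (0:ℝ)..T, (t:ℂ)^(s-1) * Complex.exp (-((Complex.I * ((-b : ℝ):ℂ)) * t)))
        + ∫ t in (0:ℝ)..T, (t:ℂ)^(s-1) * Complex.exp (-((Complex.I * ((b : ℝ):ℂ)) * t))) / 2)
      =ᶠ[atTop] (fun T : ℝ => ∫ t in (0 : ℝ)..T, Complex.cos ((b : ℂ) * t) * (t : ℂ) ^ (s - 1)) := by
    filter_upwards [eventually_ge_atTop (0:ℝ)] with T hT
    have hi1 : IntervalIntegrable (fun t : ℝ => (t:ℂ)^(s-1)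
        * Complex.exp (-((Complex.I * ((-b : ℝ):ℂ)) * t))) volume 0 T :=
      IIocInt hre (by simp) hT
    have hi2 : IntervalIntegrable (fun t : ℝ => (t:ℂ)^(s-1)
        * Complex.exp (-((Complex.I * ((b : ℝ):ℂ)) * t))) volume 0 T :=
      IIocInt hre (by simp) hT
    rw [← intervalIntegral.integral_add hi1 hi2, ← intervalIntegral.integral_div]
    apply intervalIntegral.integral_congr
    intro t _
    simp only
    rw [show -((Complex.I * ((-b : ℝ):ℂ)) * t) = ((b:ℂ) * t) * Complex.I by push_cast; ring,
      show -((Complex.I * ((b : ℝ):ℂ)) * t) = -((b:ℂ) * t) * Complex.I by push_cast; ring]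
    linear_combination (-(t:ℂ)^(s-1) / 2) * Complex.two_cos ((b:ℂ) * t)
  have hlim : (Complex.Gamma s * (Complex.I * ((-b : ℝ):ℂ))^(-s)
        + Complex.Gamma s * (Complex.I * ((b : ℝ):ℂ))^(-s)) / 2
      = Complex.cos ((π : ℂ) * s / 2) * (b : ℂ) ^ (-s) * Complex.Gamma s := by
    linear_combination (Complex.Gamma s / 2) * sum_cpow hb s
  rw [← hlim]
  exact Tendsto.congr' heq hcomb
end
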